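/- arXiv:2510.27290 — 4 statements merged into one kernel-verified Lean document; each statement's English description precedes it below -/
import Mathlib

section
/- Let S = {±a_1,…,±a_n} where 0 < a_1 < … < a_n and gcd(a_1,…,a_n) = 1, and let k ≥ 1. There exists a Borel proper k-coloring of the Schreier graph G_S on F(2^ℤ) if and only if there exist integers p, q > a_n + 1 with gcd(p,q) = 1 and functions y_1, y_2 : ℤ → Fin k such that y_1(m+p) = y_1(m) and y_2(m+q) = y_2(m) for all m ∈ ℤ, both y_1 and y_2 are proper S-colorations, and y_1(i) = y_2(i) for all 0 ≤ i ≤ a_n. -/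
/-- The shift action of `ℤ` on `α^ℤ`: `(s · x)(n) = x(n + s)`. -/
def shift {α : Type*} (s : ℤ) (x : ℤ → α) : ℤ → α := fun n => x (n + s)

/-- The free part `F(2^ℤ)` of the shift action on `2^ℤ = (ℤ → Bool)`. -/
def FreePart : Set (ℤ → Bool) := {x | ∀ s : ℤ, s ≠ 0 → shift s x ≠ x}

/-- `c` is a Borel proper coloring of the Schreier graph `G_S` on `F(2^ℤ)`,
where `S = {±a : a ∈ A}`: `c` is Borel and `c(x) ≠ c(s · x)` for all `x` and `s ∈ S`. -/
def IsBorelColoring (A : Finset ℕ) {k : ℕ}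
    (c : {x : ℤ → Bool // x ∈ FreePart} → Fin k) : Prop :=
  Measurable c ∧
    ∀ (x : {x : ℤ → Bool // x ∈ FreePart}) (a : ℕ), a ∈ A →
      ∀ (h : shift (a : ℤ) x.1 ∈ FreePart), c x ≠ c ⟨shift (a : ℤ) x.1, h⟩

/-- The Borel chromatic number `χ(a₁, …, aₙ)` of the Schreier graph `G_S` on `F(2^ℤ)`,
where `S = {±a : a ∈ A}`: the least `k` admitting a Borel proper `k`-coloring. -/
noncomputable def borelChromatic (A : Finset ℕ) : ℕ :=
  sInf {k : ℕ | ∃ c : {x : ℤ → Bool // x ∈ FreePart} → Fin k, IsBorelColoring A c}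

namespace BCP

lemma shift_shift {α : Type*} (s t : ℤ) (x : ℤ → α) :
    shift s (shift t x) = shift (t + s) x := by
  funext n; simp [shift, add_assoc, add_comm s t]

lemma shift_zero {α : Type*} (x : ℤ → α) : shift 0 x = x := by funext n; simp [shift]

lemma measurable_shift (t : ℤ) : Measurable (shift (α := Bool) t) :=
  measurable_pi_lambda _ (fun n => measurable_pi_apply (n+t))

lemma continuous_shift (t : ℤ) : Continuous (shift (α := Bool) t) :=
  continuous_pi (fun n => continuous_apply (n+t))

/-- shift as a homeomorphism -/
def shiftHomeo (t : ℤ) : (ℤ → Bool) ≃ₜ (ℤ → Bool) where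
  toFun := shift t
  invFun := shift (-t)
  left_inv := fun x => by rw [shift_shift, add_neg_cancel, shift_zero]
  right_inv := fun x => by rw [shift_shift, neg_add_cancel, shift_zero]
  continuous_toFun := continuous_shift t
  continuous_invFun := continuous_shift (-t)

lemma shift_injective {α : Type*} (t : ℤ) : Function.Injective (shift (α := α) t) := by
  intro x y h
  have := congrArg (shift (-t)) h
  rwa [shift_shift, shift_shift, add_neg_cancel, shift_zero, shift_zero] at this

lemma freePart_shift {x : ℤ → Bool} (hx : x ∈ FreePart) (t : ℤ) : shift t x ∈ FreePart := by
  intro s hs h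
  apply hx s hs
  apply shift_injective t
  rw [shift_shift, add_comm s t, ← shift_shift]
  exact h

abbrev Pt := {x : ℤ → Bool // x ∈ FreePart}

/-- shift on the free part -/
def Sh (t : ℤ) (x : Pt) : Pt := ⟨shift t x.1, freePart_shift x.2 t⟩

@[simp] lemma Sh_val (t : ℤ) (x : Pt) : (Sh t x).1 = shift t x.1 := rfl

lemma Sh_Sh (s t : ℤ) (x : Pt) : Sh s (Sh t x) = Sh (t + s) x := by
  apply Subtype.ext; simp [Sh, shift_shift]

@[simp] lemma Sh_zero (x : Pt) : Sh 0 x = x := by apply Subtype.ext; simp [Sh, shift_zero]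

lemma measurable_Sh (t : ℤ) : Measurable (Sh t) :=
  Measurable.subtype_mk ((measurable_shift t).comp measurable_subtype_coe)

lemma measurableSet_freePart : MeasurableSet FreePart := by
  have : FreePart = ⋂ (s : {s : ℤ // s ≠ 0}), {x : ℤ → Bool | shift s.1 x ≠ x} := by
    ext x; simp [FreePart]
  rw [this]
  refine MeasurableSet.iInter (fun s => ?_)
  rw [show {x : ℤ → Bool | shift s.1 x ≠ x} = {x : ℤ → Bool | shift s.1 x = x}ᶜ from rfl]
  refine MeasurableSet.compl ?_
  have : {x : ℤ → Bool | shift s.1 x = x} = ⋂ n : ℤ, ⋃ b : Bool,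
      ((fun x : ℤ → Bool => x (n + s.1)) ⁻¹' {b} ∩ (fun x : ℤ → Bool => x n) ⁻¹' {b}) := by
    ext x
    simp only [Set.mem_setOf_eq, Set.mem_iInter, Set.mem_iUnion, Set.mem_inter_iff,
      Set.mem_preimage, Set.mem_singleton_iff]
    constructor
    · intro h n; exact ⟨x n, congrFun h n, rfl⟩
    · intro h; funext n; obtain ⟨b, h1, h2⟩ := h n
      show x (n + s.1) = x n
      rw [h1, h2]
  rw [this]
  refine MeasurableSet.iInter fun n => MeasurableSet.iUnion fun b => MeasurableSet.inter ?_ ?_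
  · exact measurable_pi_apply (n + s.1) (measurableSet_singleton b)
  · exact measurable_pi_apply n (measurableSet_singleton b)

lemma isOpen_aperiodic (s : ℤ) : IsOpen {x : ℤ → Bool | shift s x ≠ x} := by
  have hcl : IsClosed {x : ℤ → Bool | shift s x = x} := by
    have : {x : ℤ → Bool | shift s x = x} = ⋂ n : ℤ, {x : ℤ → Bool | x (n + s) = x n} := by
      ext x
      simp only [Set.mem_setOf_eq, Set.mem_iInter]
      constructor
      · intro h n; exact congrFun h n
      · intro h; funext n; exact h n
    rw [this]
    exact isClosed_iInter fun n => isClosed_eq (continuous_apply (n + s)) (continuous_apply n)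
  rw [show {x : ℤ → Bool | shift s x ≠ x} = {x : ℤ → Bool | shift s x = x}ᶜ from rfl]
  exact hcl.isOpen_compl

lemma dense_aperiodic (s : ℤ) (hs : s ≠ 0) : Dense {x : ℤ → Bool | shift s x ≠ x} := by
  rw [dense_iff_inter_open]
  intro U hU ⟨x₀, hx₀⟩
  obtain ⟨I, u, hu, hpi⟩ := isOpen_pi_iff.1 hU x₀ hx₀
  set b : ℕ := (I ∪ I.image (· - s)).sup Int.natAbs with hb
  set n : ℤ := (b : ℤ) + 1 with hn
  have hnI : n ∉ I := by
    intro h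
    have : n.natAbs ≤ b := Finset.le_sup (f := Int.natAbs) (Finset.mem_union_left _ h)
    omega
  have hnsI : n + s ∉ I := by
    intro h
    have : (n + s - s).natAbs ≤ b := Finset.le_sup (f := Int.natAbs)
      (Finset.mem_union_right _ (Finset.mem_image_of_mem _ h))
    simp only [add_sub_cancel_right] at this
    omega
  set y : ℤ → Bool := fun m => if m ∈ I then x₀ m else if m = n then true else false with hy
  refine ⟨y, ?_, ?_⟩
  · apply hpi
    intro i hi
    have hi' : i ∈ I := Finset.mem_coe.1 hi
    have hyi : y i = x₀ i := by simp only [hy]; rw [if_pos hi']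
    rw [hyi]
    exact (hu i hi').2
  · intro h
    have h1 : y n = true := by simp [hy, hnI]
    have h2 : y (n + s) = false := by
      have hne : n + s ≠ n := by intro hc; apply hs; omega
      simp [hy, hnsI, hne]
    have h3 : y (n + s) = y n := congrFun h n
    rw [h1, h2] at h3
    exact Bool.false_ne_true h3

lemma freePart_residual : FreePart ∈ residual (ℤ → Bool) := by
  have : FreePart = ⋂ (s : {s : ℤ // s ≠ 0}), {x : ℤ → Bool | shift s.1 x ≠ x} := by
    ext x; simp [FreePart]
  rw [this]
  rw [countable_iInter_mem]
  exact fun s => residual_of_dense_open (isOpen_aperiodic s.1) (dense_aperiodic s.1 s.2)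

open Topology in
/-- Key category lemma: a non-meager Baire-measurable set intersects its own shift
for all large shifts. -/
lemma exists_double_point (B : Set (ℤ → Bool)) (hB : BaireMeasurableSet B)
    (hnm : ¬ IsMeagre B) :
    ∃ L : ℕ, ∀ t : ℤ, L < t.natAbs → ∃ x ∈ B, shift t x ∈ B := by
  obtain ⟨U, hUo, hBU⟩ := hB.residualEq_isOpen
  have hUne : U.Nonempty := by
    rcases Set.eq_empty_or_nonempty U with h | h
    · exfalso
      apply hnm
      rw [IsMeagre]
      refine Filter.mem_of_superset hBU ?_
      intro x hx
      simp only [h] at hx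
      simp only [Set.mem_compl_iff]
      intro hxB
      change (x ∈ B) = (x ∈ (∅ : Set (ℤ → Bool))) at hx
      rw [show (x ∈ B) = (x ∈ (∅ : Set (ℤ → Bool))) from hx] at hxB
      exact hxB
    · exact h
  obtain ⟨x₀, hx₀⟩ := hUne
  obtain ⟨I, u, hu, hpi⟩ := isOpen_pi_iff.1 hUo x₀ hx₀
  set b : ℕ := I.sup Int.natAbs with hb
  refine ⟨2 * b, fun t ht => ?_⟩
  have hIb : ∀ i ∈ I, i.natAbs ≤ b := fun i hi => Finset.le_sup (f := Int.natAbs) hi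
  set C : Set (ℤ → Bool) := {y | ∀ i ∈ I, y i = x₀ i} with hC
  have hCU : C ⊆ U := by
    intro y hy
    apply hpi
    intro i hi
    have hi' : i ∈ I := Finset.mem_coe.1 hi
    rw [hy i hi']
    exact (hu i hi').2
  have hCopen : IsOpen C := by
    have : C = ⋂ i ∈ I, (fun y : ℤ → Bool => y i) ⁻¹' {x₀ i} := by
      ext y; simp [hC]
    rw [this]
    exact isOpen_biInter_finset fun i _ => (continuous_apply i).isOpen_preimage _ trivial
  -- the combined point
  set z : ℤ → Bool := fun m => if m ∈ I then x₀ m else if m - t ∈ I then x₀ (m - t) else false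
    with hz
  have hzC : z ∈ C := fun i hi => by simp [hz, if_pos hi]
  have hzC' : shift t z ∈ C := by
    intro i hi
    have h1 : i + t ∉ I := by
      intro h
      have := hIb _ h
      have := hIb _ hi
      omega
    show z (i + t) = x₀ i
    simp only [hz, if_neg h1, add_sub_cancel_right, if_pos hi]
  -- category argument
  have htd : Filter.Tendsto (shift t) (residual (ℤ → Bool)) (residual (ℤ → Bool)) :=
    tendsto_residual_of_isOpenMap (continuous_shift t) (shiftHomeo t).isOpenMap
  have h2 : (B ∘ shift t) =ᵇ (U ∘ shift t) := hBU.comp_tendsto htd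
  have hmem : ∀ᵇ x : ℤ → Bool, ((x ∈ B) = (x ∈ U)) ∧ ((shift t x ∈ B) = (shift t x ∈ U)) :=
    Filter.Eventually.and hBU h2
  have hdense : Dense {x : ℤ → Bool |
      ((x ∈ B) = (x ∈ U)) ∧ ((shift t x ∈ B) = (shift t x ∈ U))} :=
    dense_of_mem_residual hmem
  have hV : IsOpen (C ∩ shift t ⁻¹' C) := hCopen.inter (hCopen.preimage (continuous_shift t))
  have hVne : (C ∩ shift t ⁻¹' C).Nonempty := ⟨z, hzC, hzC'⟩
  obtain ⟨w, hw1, hw2⟩ := (dense_iff_inter_open.1 hdense) _ hV hVne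
  rw [Set.mem_setOf_eq] at hw2
  exact ⟨w, cast hw2.1.symm (hCU hw1.1), cast hw2.2.symm (hCU hw1.2)⟩

lemma periodize {k N : ℕ} (u : ℤ → Fin k) (p : ℕ) (hp : N + 1 < p) (A : Finset ℕ)
    (hA : ∀ a ∈ A, 1 ≤ a ∧ a ≤ N)
    (hu : ∀ (t : ℤ), ∀ a ∈ A, u t ≠ u (t + a))
    (hrep : ∀ i : ℤ, 0 ≤ i → i ≤ N → u i = u (p + i)) :
    ∃ y : ℤ → Fin k, (∀ m, y (m + p) = y m) ∧ (∀ m m', (m - m').natAbs ∈ A → y m ≠ y m') ∧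
      (∀ i : ℤ, 0 ≤ i → i ≤ N → y i = u i) := by
  have hNZ : (N : ℤ) + 1 < p := by exact_mod_cast hp
  have hp0 : (0 : ℤ) < p := by omega
  refine ⟨fun m => u (m % p), fun m => congrArg u (by
    rw [show m + (p : ℤ) = m + (p : ℤ) * 1 from by ring, Int.add_mul_emod_self_left]), ?_, ?_⟩
  · have claim : ∀ (m : ℤ), ∀ a ∈ A, u (m % p) ≠ u ((m + a) % p) := by
      intro m a ha
      obtain ⟨ha1, haN⟩ := hA a ha
      have haZ1 : (1 : ℤ) ≤ a := by exact_mod_cast ha1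
      have haZN : (a : ℤ) ≤ N := by exact_mod_cast haN
      set r := m % p with hr
      have hr0 : 0 ≤ r := Int.emod_nonneg m (ne_of_gt hp0)
      have hrlt : r < p := Int.emod_lt_of_pos m hp0
      have hma : (m + a) % p = (r + a) % p := by
        have hd : m + (a : ℤ) = (r + a) + (p : ℤ) * (m / p) := by
          have := Int.emod_add_mul_ediv m p
          rw [hr]; linarith
        rw [hd, Int.add_mul_emod_self_left]
      by_cases hcase : r + a < p
      · rw [hma, Int.emod_eq_of_lt (by omega) hcase]
        exact hu r a ha
      · push_neg at hcase
        have h1 : (r + a) % p = r + a - p := by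
          have e1 : (r + (a : ℤ)) % p = (r + a - p) % p := by
            conv_lhs => rw [show r + (a : ℤ) = (r + a - p) + (p : ℤ) * 1 from by ring]
            rw [Int.add_mul_emod_self_left]
          rw [e1]
          apply Int.emod_eq_of_lt <;> omega
        have := hrep (r + a - p) (by omega) (by omega)
        rw [hma, h1, this, show (p : ℤ) + (r + a - p) = r + a from by ring]
        exact hu r a ha
    intro m m' hmem
    have ha1 := (hA _ hmem).1
    rcases Int.natAbs_eq (m - m') with h | h
    · have hm : m = m' + ((m - m').natAbs : ℤ) := by omega
      rw [hm]
      exact (claim m' _ hmem).symm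
    · have hm : m' = m + ((m - m').natAbs : ℤ) := by omega
      rw [hm]
      exact claim m _ hmem
  · intro i h0 hN
    show u (i % p) = u i
    rw [Int.emod_eq_of_lt h0 (by omega)]

lemma forward_direction (A : Finset ℕ) (hA : A.Nonempty) (hpos : ∀ a ∈ A, 0 < a)
    (k : ℕ) (c : Pt → Fin k) (hc : IsBorelColoring A c) :
    ∃ p q : ℕ, A.max' hA + 1 < p ∧ A.max' hA + 1 < q ∧ Nat.gcd p q = 1 ∧
      ∃ y₁ y₂ : ℤ → Fin k,
        (∀ m : ℤ, y₁ (m + (p : ℤ)) = y₁ m) ∧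
        (∀ m : ℤ, y₂ (m + (q : ℤ)) = y₂ m) ∧
        (∀ m m' : ℤ, (m - m').natAbs ∈ A → y₁ m ≠ y₁ m') ∧
        (∀ m m' : ℤ, (m - m').natAbs ∈ A → y₂ m ≠ y₂ m') ∧
        (∀ i : ℕ, i ≤ A.max' hA → y₁ (i : ℤ) = y₂ (i : ℤ)) := by
  set N := A.max' hA with hN
  have hNbd : ∀ a ∈ A, 1 ≤ a ∧ a ≤ N := fun a ha => ⟨hpos a ha, Finset.le_max' A a ha⟩
  -- window sets
  set S : (Fin (N+1) → Fin k) → Set Pt :=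
    fun f => {X | ∀ i : Fin (N+1), c (Sh ((i : ℕ) : ℤ) X) = f i} with hS
  set B : (Fin (N+1) → Fin k) → Set (ℤ → Bool) := fun f => Subtype.val '' (S f) with hB
  have hSmeas : ∀ f, MeasurableSet (S f) := by
    intro f
    have : S f = ⋂ i : Fin (N+1), (fun X => c (Sh ((i : ℕ) : ℤ) X)) ⁻¹' {f i} := by
      ext X; simp [hS]
    rw [this]
    exact MeasurableSet.iInter fun i =>
      (hc.1.comp (measurable_Sh _)) (measurableSet_singleton _)
  have hBmeas : ∀ f, MeasurableSet (B f) := fun f =>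
    measurableSet_freePart.subtype_image (hSmeas f)
  have hcover : FreePart ⊆ ⋃ f, B f := by
    intro x hx
    refine Set.mem_iUnion.2 ⟨fun i => c (Sh ((i : ℕ) : ℤ) ⟨x, hx⟩), ⟨x, hx⟩, fun i => rfl, rfl⟩
  have hex : ∃ f, ¬ IsMeagre (B f) := by
    by_contra hcon
    push_neg at hcon
    have h1 : (⋃ f, B f)ᶜ ∈ residual (ℤ → Bool) := by
      rw [Set.compl_iUnion, countable_iInter_mem]
      exact fun f => hcon f
    have h2 : (⋃ f, B f) ∈ residual (ℤ → Bool) :=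
      Filter.mem_of_superset freePart_residual hcover
    have h3 : ((⋃ f, B f)ᶜ ∩ ⋃ f, B f) ∈ residual (ℤ → Bool) := Filter.inter_mem h1 h2
    rw [Set.compl_inter_self] at h3
    obtain ⟨x, hx⟩ := (dense_of_mem_residual h3).nonempty
    exact hx
  obtain ⟨f₀, hf₀⟩ := hex
  obtain ⟨L, hL⟩ := exists_double_point (B f₀) ((hBmeas f₀).baireMeasurableSet) hf₀
  -- extract the two points
  have key : ∀ t : ℕ, L < t → ∃ X : Pt, X ∈ S f₀ ∧ Sh (t : ℤ) X ∈ S f₀ := by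
    intro t ht
    obtain ⟨x, hx1, hx2⟩ := hL (t : ℤ) (by simpa using ht)
    obtain ⟨X, hXS, hXval⟩ := hx1
    obtain ⟨Y, hYS, hYval⟩ := hx2
    refine ⟨X, hXS, ?_⟩
    have : Y = Sh (t : ℤ) X := by
      apply Subtype.ext
      rw [hYval, Sh_val, hXval]
    rwa [← this]
  have build : ∀ t : ℕ, N + 1 < t → L < t →
      ∃ y : ℤ → Fin k, (∀ m, y (m + t) = y m) ∧
        (∀ m m', (m - m').natAbs ∈ A → y m ≠ y m') ∧
        (∀ i : ℕ, i ≤ N → y (i : ℤ) = f₀ ⟨min i N, by omega⟩) := by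
    intro t htN htL
    obtain ⟨X, hX, hX'⟩ := key t htL
    set u : ℤ → Fin k := fun s => c (Sh s X) with hu
    have huprop : ∀ (s : ℤ), ∀ a ∈ A, u s ≠ u (s + a) := by
      intro s a ha
      have hfp : shift (a : ℤ) (Sh s X).1 ∈ FreePart := freePart_shift (Sh s X).2 _
      have hne := hc.2 (Sh s X) a ha hfp
      have heq : (⟨shift (a : ℤ) (Sh s X).1, hfp⟩ : Pt) = Sh (s + a) X := by
        apply Subtype.ext
        simp only [Sh_val]
        rw [shift_shift]
      rwa [heq] at hne
    have hwin : ∀ j : Fin (N+1), u ((j : ℕ) : ℤ) = f₀ j ∧ u ((t : ℤ) + (j : ℕ)) = f₀ j := by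
      intro j
      refine ⟨hX j, ?_⟩
      have h2 := hX' j
      rw [Sh_Sh] at h2
      exact h2
    have hrep : ∀ i : ℤ, 0 ≤ i → i ≤ N → u i = u (t + i) := by
      intro i h0 hiN
      have hi : ((i.toNat : ℕ) : ℤ) = i := Int.toNat_of_nonneg h0
      set j : Fin (N+1) := ⟨i.toNat, by omega⟩ with hj
      have h1 := (hwin j).1
      have h2 := (hwin j).2
      rw [show ((j : ℕ) : ℤ) = i from by rw [hj]; exact hi] at h1 h2
      rw [h1, h2]
    obtain ⟨y, hy1, hy2, hy3⟩ := periodize u t htN A hNbd huprop hrep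
    refine ⟨y, hy1, hy2, ?_⟩
    intro i hiN
    set j : Fin (N+1) := ⟨min i N, by omega⟩ with hj
    have h1 := (hwin j).1
    have hji : ((j : ℕ) : ℤ) = (i : ℤ) := by
      have : (j : ℕ) = i := by simp [hj]; omega
      rw [this]
    rw [hji] at h1
    rw [hy3 (i : ℤ) (by positivity) (by exact_mod_cast hiN), h1]
  obtain ⟨y₁, hy₁p, hy₁prop, hy₁win⟩ := build (max (N + 2) (L + 1)) (by omega) (by omega)
  obtain ⟨y₂, hy₂p, hy₂prop, hy₂win⟩ := build (max (N + 2) (L + 1) + 1) (by omega) (by omega)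
  refine ⟨max (N + 2) (L + 1), max (N + 2) (L + 1) + 1, by omega, by omega, ?_, y₁, y₂,
    hy₁p, hy₂p, hy₁prop, hy₂prop, ?_⟩
  · have h : Nat.Coprime (max (N + 2) (L + 1)) (max (N + 2) (L + 1) + 1) := by simp
    exact h
  · intro i hiN
    rw [hy₁win i hiN, hy₂win i hiN]

/-! ### Marker construction -/

lemma nat_sInf_eq {S : Set ℕ} (hS : S.Nonempty) (n : ℕ) :
    sInf S = n ↔ n ∈ S ∧ ∀ m < n, m ∉ S := by
  constructor
  · rintro rfl
    exact ⟨Nat.sInf_mem hS, fun m hm => Nat.notMem_of_lt_sInf hm⟩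
  · rintro ⟨h1, h2⟩
    have hle : sInf S ≤ n := Nat.sInf_le h1
    have hge : n ≤ sInf S := by
      by_contra hc
      push_neg at hc
      exact h2 _ hc (Nat.sInf_mem hS)
    omega

/-- Codes for basic clopen cylinders. -/
def Cyl : Type := Σ F : Finset ℤ, ({i // i ∈ F} → Bool)

instance : Countable Cyl := by unfold Cyl; infer_instance

noncomputable def eCyl : Cyl → ℕ := (exists_injective_nat Cyl).choose

lemma eCyl_inj : Function.Injective eCyl := (exists_injective_nat Cyl).choose_spec

def cylSet (σ : Cyl) : Set Pt := {x | ∀ i : {i // i ∈ σ.1}, x.1 i.1 = σ.2 i}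

lemma cylSet_meas (σ : Cyl) : MeasurableSet (cylSet σ) := by
  have : cylSet σ = ⋂ i : {i // i ∈ σ.1}, (fun x : Pt => x.1 i.1) ⁻¹' {σ.2 i} := by
    ext x; simp [cylSet]
  rw [this]
  exact MeasurableSet.iInter fun i =>
    ((measurable_pi_apply i.1).comp measurable_subtype_coe) (measurableSet_singleton _)

/-- The symmetric window of displacements. -/
noncomputable def win (d : ℕ) : Finset ℤ := (Finset.Icc (-(d : ℤ)) (d : ℤ)).erase 0

lemma mem_win {d : ℕ} {t : ℤ} : t ∈ win d ↔ t ≠ 0 ∧ -(d : ℤ) ≤ t ∧ t ≤ d := by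
  simp [win, Finset.mem_erase, Finset.mem_Icc, and_assoc]

lemma win_neg {d : ℕ} {t : ℤ} (h : t ∈ win d) : -t ∈ win d := by
  rw [mem_win] at h ⊢; omega

/-- Separation: a free point can be separated from finitely many of its shifts
by a cylinder. -/
lemma exists_sep (x : Pt) (d : ℕ) :
    ∃ σ : Cyl, x ∈ cylSet σ ∧ ∀ t ∈ win d, Sh t x ∉ cylSet σ := by
  classical
  have hwit : ∀ t ∈ win d, ∃ i : ℤ, x.1 (i + t) ≠ x.1 i := by
    intro t ht
    have hne : shift t x.1 ≠ x.1 := x.2 t (mem_win.1 ht).1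
    by_contra hc
    push_neg at hc
    exact hne (funext fun i => hc i)
  set wit : ℤ → ℤ := fun t => if h : t ∈ win d then (hwit t h).choose else 0 with hwitdef
  set F : Finset ℤ := (win d).image wit with hF
  refine ⟨⟨F, fun i => x.1 i.1⟩, fun i => rfl, ?_⟩
  intro t ht hmem
  have hiF : wit t ∈ F := Finset.mem_image_of_mem wit ht
  have := hmem ⟨wit t, hiF⟩
  simp only [Sh_val] at this
  have hwt : x.1 (wit t + t) ≠ x.1 (wit t) := by
    simp only [hwitdef, dif_pos ht]
    exact (hwit t ht).choose_spec
  exact hwt this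

/-- `pred d x n` : `n` codes a cylinder containing `x` but no `t`-shift of `x`
for `t` in the window. -/
def predC (d : ℕ) (x : Pt) (n : ℕ) : Prop :=
  ∃ σ : Cyl, eCyl σ = n ∧ x ∈ cylSet σ ∧ ∀ t ∈ win d, Sh t x ∉ cylSet σ

lemma predC_exists (d : ℕ) (x : Pt) : ∃ n, predC d x n := by
  obtain ⟨σ, h1, h2⟩ := exists_sep x d
  exact ⟨eCyl σ, σ, rfl, h1, h2⟩

noncomputable def gam (d : ℕ) (x : Pt) : ℕ := sInf {n | predC d x n}

lemma gam_spec (d : ℕ) (x : Pt) : predC d x (gam d x) := Nat.sInf_mem (predC_exists d x)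

lemma gam_ne {d : ℕ} {x : Pt} {t : ℤ} (ht : t ∈ win d) : gam d (Sh t x) ≠ gam d x := by
  intro heq
  obtain ⟨σ, hσ1, hσ2, hσ3⟩ := gam_spec d x
  obtain ⟨σ', hσ'1, hσ'2, _⟩ := gam_spec d (Sh t x)
  rw [heq, ← hσ1] at hσ'1
  have : σ' = σ := eCyl_inj hσ'1
  rw [this] at hσ'2
  exact hσ3 t ht hσ'2

lemma predC_meas (d n : ℕ) : MeasurableSet {x : Pt | predC d x n} := by
  by_cases hn : ∃ σ : Cyl, eCyl σ = n
  · obtain ⟨σ, hσ⟩ := hn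
    have : {x : Pt | predC d x n} =
        cylSet σ ∩ ⋂ t ∈ win d, ((Sh t) ⁻¹' (cylSet σ))ᶜ := by
      ext x
      simp only [Set.mem_setOf_eq, predC, Set.mem_inter_iff, Set.mem_iInter,
        Set.mem_compl_iff, Set.mem_preimage]
      constructor
      · rintro ⟨σ', h1, h2, h3⟩
        rw [← hσ] at h1
        have : σ' = σ := eCyl_inj h1
        subst this
        exact ⟨h2, h3⟩
      · rintro ⟨h2, h3⟩
        exact ⟨σ, hσ, h2, h3⟩
    rw [this]
    refine (cylSet_meas σ).inter (MeasurableSet.biInter (Set.to_countable _) fun t _ => ?_)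
    exact (((cylSet_meas σ).preimage (measurable_Sh t))).compl
  · have : {x : Pt | predC d x n} = ∅ := by
      ext x
      simp only [Set.mem_setOf_eq, predC, Set.mem_empty_iff_false, iff_false]
      rintro ⟨σ, h1, -⟩
      exact hn ⟨σ, h1⟩
    rw [this]
    exact MeasurableSet.empty

lemma gam_eq_iff (d n : ℕ) (x : Pt) :
    gam d x = n ↔ predC d x n ∧ ∀ m < n, ¬ predC d x m :=
  nat_sInf_eq (predC_exists d x) n

lemma gamSet_meas (d n : ℕ) : MeasurableSet {x : Pt | gam d x = n} := by
  have : {x : Pt | gam d x = n} =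
      {x : Pt | predC d x n} ∩ ⋂ m ∈ Finset.range n, {x : Pt | predC d x m}ᶜ := by
    ext x
    simp only [Set.mem_setOf_eq, Set.mem_inter_iff, Set.mem_iInter, Set.mem_compl_iff,
      Finset.mem_range]
    rw [gam_eq_iff]
  rw [this]
  exact (predC_meas d n).inter
    (MeasurableSet.biInter (Set.to_countable _) fun m _ => (predC_meas d m).compl)

/-- Greedy construction of a maximal `d`-independent set, by recursion on `gam`. -/
def PP (d : ℕ) : ℕ → ℕ → Set Pt
  | 0 => fun _ => ∅
  | (n+1) => fun m =>
      if m = n then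
        {x | gam d x = n ∧
          ∀ t ∈ win d, gam d (Sh t x) < n → Sh t x ∉ PP d n (gam d (Sh t x))}
      else PP d n m

def Pk (d m : ℕ) : Set Pt := PP d (m+1) m

lemma PP_eq (d : ℕ) : ∀ n m, m < n → PP d n m = Pk d m := by
  intro n
  induction n with
  | zero => intro m hm; omega
  | succ n ih =>
    intro m hm
    by_cases h : m = n
    · subst h; rfl
    · have hmn : m < n := by omega
      show PP d (n+1) m = Pk d m
      rw [show PP d (n+1) m = PP d n m from by simp [PP, if_neg h]]
      exact ih m hmn

lemma Pk_def (d m : ℕ) (x : Pt) : x ∈ Pk d m ↔ (gam d x = m ∧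
    ∀ t ∈ win d, gam d (Sh t x) < m → Sh t x ∉ Pk d (gam d (Sh t x))) := by
  show x ∈ PP d (m+1) m ↔ _
  rw [show PP d (m+1) m = {x | gam d x = m ∧
      ∀ t ∈ win d, gam d (Sh t x) < m → Sh t x ∉ PP d m (gam d (Sh t x))} from by
    simp [PP]]
  simp only [Set.mem_setOf_eq]
  constructor
  · rintro ⟨h1, h2⟩
    refine ⟨h1, fun t ht hlt => ?_⟩
    rw [← PP_eq d m _ hlt]
    exact h2 t ht hlt
  · rintro ⟨h1, h2⟩
    refine ⟨h1, fun t ht hlt => ?_⟩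
    rw [PP_eq d m _ hlt]
    exact h2 t ht hlt

def Mk (d : ℕ) : Set Pt := ⋃ m, Pk d m

lemma Pk_gam {d m : ℕ} {x : Pt} (h : x ∈ Pk d m) : gam d x = m := ((Pk_def d m x).1 h).1

lemma mem_Mk_iff {d : ℕ} {x : Pt} : x ∈ Mk d ↔ x ∈ Pk d (gam d x) := by
  constructor
  · rintro h
    obtain ⟨m, hm⟩ := Set.mem_iUnion.1 h
    rwa [Pk_gam hm]
  · intro h
    exact Set.mem_iUnion.2 ⟨_, h⟩

lemma Mk_indep {d : ℕ} {x : Pt} {t : ℤ} (hx : x ∈ Mk d) (ht : t ∈ win d)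
    (hx' : Sh t x ∈ Mk d) : False := by
  rcases Nat.lt_or_ge (gam d (Sh t x)) (gam d x) with h | h
  · have h1 := (Pk_def d (gam d x) x).1 (mem_Mk_iff.1 hx)
    exact h1.2 t ht h (mem_Mk_iff.1 hx')
  · have hne : gam d (Sh t x) ≠ gam d x := gam_ne ht
    have hlt : gam d x < gam d (Sh t x) := by omega
    have h1 := (Pk_def d (gam d (Sh t x)) (Sh t x)).1 (mem_Mk_iff.1 hx')
    have hxx : Sh (-t) (Sh t x) = x := by rw [Sh_Sh, add_neg_cancel, Sh_zero]
    have h2 := h1.2 (-t) (win_neg ht)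
    rw [hxx] at h2
    exact h2 hlt (mem_Mk_iff.1 hx)

lemma Mk_max {d : ℕ} (x : Pt) (hx : x ∉ Mk d) : ∃ t ∈ win d, Sh t x ∈ Mk d := by
  have h1 : x ∉ Pk d (gam d x) := fun h => hx (mem_Mk_iff.2 h)
  rw [Pk_def] at h1
  push_neg at h1
  obtain ⟨t, ht, hlt, hmem⟩ := h1 rfl
  exact ⟨t, ht, mem_Mk_iff.2 hmem⟩

lemma Mk_complete {d : ℕ} (x : Pt) : ∃ t : ℤ, -(d : ℤ) ≤ t ∧ t ≤ d ∧ Sh t x ∈ Mk d := by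
  by_cases hx : x ∈ Mk d
  · exact ⟨0, by omega, by omega, by rwa [Sh_zero]⟩
  · obtain ⟨t, ht, hmem⟩ := Mk_max x hx
    rw [mem_win] at ht
    exact ⟨t, ht.2.1, ht.2.2, hmem⟩

lemma Pk_meas (d : ℕ) : ∀ m, MeasurableSet (Pk d m) := by
  intro m
  induction m using Nat.strong_induction_on with
  | _ m ih =>
    have : Pk d m = {x : Pt | gam d x = m} ∩
        ⋂ t ∈ win d, ⋂ n ∈ Finset.range m,
          ((Sh t) ⁻¹' ({y : Pt | gam d y = n} ∩ Pk d n))ᶜ := by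
      ext x
      rw [Pk_def]
      simp only [Set.mem_inter_iff, Set.mem_setOf_eq, Set.mem_iInter, Set.mem_compl_iff,
        Set.mem_preimage, Finset.mem_range]
      constructor
      · rintro ⟨h1, h2⟩
        refine ⟨h1, fun t ht n hn hc => ?_⟩
        exact h2 t ht (by rw [hc.1]; exact hn) (by rw [hc.1]; exact hc.2)
      · rintro ⟨h1, h2⟩
        refine ⟨h1, fun t ht hlt hc => ?_⟩
        exact h2 t ht (gam d (Sh t x)) hlt ⟨rfl, hc⟩
    rw [this]
    refine (gamSet_meas d m).inter ?_
    refine MeasurableSet.biInter (Set.to_countable _) fun t _ => ?_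
    refine MeasurableSet.biInter (Set.to_countable _) fun n hn => ?_
    have hnm : n < m := Finset.mem_range.1 hn
    exact (((gamSet_meas d n).inter (ih n hnm)).preimage (measurable_Sh t)).compl

lemma Mk_meas (d : ℕ) : MeasurableSet (Mk d) := MeasurableSet.iUnion (Pk_meas d)

/-! ### Marker coordinates -/

lemma Jm_exists (d : ℕ) (x : Pt) : ∃ j : ℕ, Sh (-(j : ℤ)) x ∈ Mk d := by
  obtain ⟨t, ht1, ht2, htM⟩ := Mk_complete (d := d) (Sh (-(d : ℤ)) x)
  rw [Sh_Sh] at htM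
  refine ⟨((d : ℤ) - t).toNat, ?_⟩
  have : -(((d : ℤ) - t).toNat : ℤ) = -(d : ℤ) + t := by omega
  rw [this]
  exact htM

noncomputable def Jm (d : ℕ) (x : Pt) : ℕ := sInf {j : ℕ | Sh (-(j : ℤ)) x ∈ Mk d}

lemma Jm_spec (d : ℕ) (x : Pt) : Sh (-(Jm d x : ℤ)) x ∈ Mk d :=
  Nat.sInf_mem (Jm_exists d x)

lemma Jm_min (d : ℕ) (x : Pt) {i : ℕ} (hi : i < Jm d x) : Sh (-(i : ℤ)) x ∉ Mk d :=
  Nat.notMem_of_lt_sInf hi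

lemma Gm_exists (d : ℕ) (x : Pt) :
    ∃ g : ℕ, 1 ≤ g ∧ Sh ((g : ℤ) - (Jm d x : ℤ)) x ∈ Mk d := by
  obtain ⟨t, ht1, ht2, htM⟩ := Mk_complete (d := d) (Sh ((d : ℤ) + 1 - (Jm d x : ℤ)) x)
  rw [Sh_Sh] at htM
  refine ⟨((d : ℤ) + 1 + t).toNat, by omega, ?_⟩
  have : (((d : ℤ) + 1 + t).toNat : ℤ) - (Jm d x : ℤ) = (d : ℤ) + 1 - (Jm d x : ℤ) + t := by
    omega
  rw [this]
  exact htM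

noncomputable def Gm (d : ℕ) (x : Pt) : ℕ :=
  sInf {g : ℕ | 1 ≤ g ∧ Sh ((g : ℤ) - (Jm d x : ℤ)) x ∈ Mk d}

lemma Gm_spec (d : ℕ) (x : Pt) :
    1 ≤ Gm d x ∧ Sh ((Gm d x : ℤ) - (Jm d x : ℤ)) x ∈ Mk d :=
  Nat.sInf_mem (Gm_exists d x)

lemma Gm_min (d : ℕ) (x : Pt) {g : ℕ} (hg : g < Gm d x) :
    ¬ (1 ≤ g ∧ Sh ((g : ℤ) - (Jm d x : ℤ)) x ∈ Mk d) :=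
  Nat.notMem_of_lt_sInf hg

lemma Gm_eq_iff (d : ℕ) (x : Pt) (n : ℕ) :
    Gm d x = n ↔ (1 ≤ n ∧ Sh ((n : ℤ) - (Jm d x : ℤ)) x ∈ Mk d) ∧
      ∀ m < n, ¬ (1 ≤ m ∧ Sh ((m : ℤ) - (Jm d x : ℤ)) x ∈ Mk d) :=
  nat_sInf_eq (Gm_exists d x) n

lemma Gm_gt (d : ℕ) (x : Pt) : d < Gm d x := by
  by_contra hc
  push_neg at hc
  have h1 := (Gm_spec d x).1
  have h2 := (Gm_spec d x).2
  have hwin : (Gm d x : ℤ) ∈ win d := by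
    rw [mem_win]
    constructor
    · exact_mod_cast Nat.one_le_iff_ne_zero.1 h1
    · omega
  refine Mk_indep (Jm_spec d x) hwin ?_
  rw [Sh_Sh]
  rw [show -(Jm d x : ℤ) + (Gm d x : ℤ) = (Gm d x : ℤ) - (Jm d x : ℤ) from by ring]
  exact h2

lemma Jm_lt_Gm (d : ℕ) (x : Pt) : Jm d x < Gm d x := by
  by_contra hc
  push_neg at hc
  have h2 := (Gm_spec d x).2
  have h1 := (Gm_spec d x).1
  have hi : Jm d x - Gm d x < Jm d x := by omega
  refine Jm_min d x hi ?_
  have : -((Jm d x - Gm d x : ℕ) : ℤ) = (Gm d x : ℤ) - (Jm d x : ℤ) := by omega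
  rw [this]
  exact h2

/-- No markers strictly inside the gap. -/
lemma gap_empty (d : ℕ) (x : Pt) {t : ℕ} (h1 : 1 ≤ t) (h2 : t < Gm d x) :
    Sh ((t : ℤ) - (Jm d x : ℤ)) x ∉ Mk d := fun hm => Gm_min d x h2 ⟨h1, hm⟩

lemma JG_step1 (d : ℕ) (x : Pt) (a : ℕ) (ha1 : 1 ≤ a) (had : a ≤ d)
    (h : Jm d x + a < Gm d x) :
    Jm d (Sh (a : ℤ) x) = Jm d x + a ∧ Gm d (Sh (a : ℤ) x) = Gm d x := by
  set j := Jm d x with hj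
  set g := Gm d x with hg
  have hshift : ∀ s : ℤ, Sh s (Sh (a : ℤ) x) = Sh ((a : ℤ) + s) x := fun s => Sh_Sh s a x
  have hJ : Jm d (Sh (a : ℤ) x) = j + a := by
    rw [Jm, nat_sInf_eq]
    · constructor
      · show Sh _ (Sh (a : ℤ) x) ∈ Mk d
        rw [hshift, show (a : ℤ) + -((j + a : ℕ) : ℤ) = -(j : ℤ) from by push_cast; ring]
        exact Jm_spec d x
      · intro i hi hmem
        rw [Set.mem_setOf_eq, hshift] at hmem
        by_cases hia : a ≤ i
        · have : (a : ℤ) + -(i : ℤ) = -((i - a : ℕ) : ℤ) := by omega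
          rw [this] at hmem
          exact Jm_min d x (by omega) hmem
        · push_neg at hia
          have : (a : ℤ) + -(i : ℤ) = ((j + a - i : ℕ) : ℤ) - (j : ℤ) := by push_cast; omega
          rw [this] at hmem
          exact gap_empty d x (by omega) (by omega) hmem
    · exact Jm_exists d _
  refine ⟨hJ, ?_⟩
  rw [Gm, nat_sInf_eq]
  · constructor
    · refine ⟨(Gm_spec d x).1, ?_⟩
      rw [hshift, hJ, show (a : ℤ) + ((g : ℤ) - ((j + a : ℕ) : ℤ)) = (g : ℤ) - (j : ℤ) from by
        push_cast; ring]
      exact (Gm_spec d x).2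
    · rintro g'' hg'' ⟨hg''1, hmem⟩
      rw [hshift, hJ, show (a : ℤ) + ((g'' : ℤ) - ((j + a : ℕ) : ℤ)) = (g'' : ℤ) - (j : ℤ) from by
        push_cast; ring] at hmem
      exact gap_empty d x hg''1 (by omega) hmem
  · exact Gm_exists d _

lemma JG_step2 (d : ℕ) (x : Pt) (a : ℕ) (ha1 : 1 ≤ a) (had : a ≤ d)
    (h : Gm d x ≤ Jm d x + a) :
    Jm d (Sh (a : ℤ) x) = Jm d x + a - Gm d x := by
  set j := Jm d x with hj
  set g := Gm d x with hg
  have hjg : j < g := Jm_lt_Gm d x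
  have hshift : ∀ s : ℤ, Sh s (Sh (a : ℤ) x) = Sh ((a : ℤ) + s) x := fun s => Sh_Sh s a x
  rw [Jm, nat_sInf_eq]
  · constructor
    · show Sh _ (Sh (a : ℤ) x) ∈ Mk d
      rw [hshift, show (a : ℤ) + -((j + a - g : ℕ) : ℤ) = (g : ℤ) - (j : ℤ) from by omega]
      exact (Gm_spec d x).2
    · intro i hi hmem
      rw [Set.mem_setOf_eq, hshift] at hmem
      -- position a - i is strictly between the marker at g - j and distance ≤ d from it
      have hr : 1 ≤ (a : ℤ) + -(i : ℤ) - ((g : ℤ) - (j : ℤ)) ∧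
          (a : ℤ) + -(i : ℤ) - ((g : ℤ) - (j : ℤ)) ≤ d := by omega
      refine Mk_indep (Gm_spec d x).2 (t := (a : ℤ) + -(i : ℤ) - ((g : ℤ) - (j : ℤ)))
        ?_ ?_
      · rw [mem_win]; omega
      · rw [Sh_Sh, show ((g : ℤ) - (j : ℤ)) + ((a : ℤ) + -(i : ℤ) - ((g : ℤ) - (j : ℤ)))
          = (a : ℤ) + -(i : ℤ) from by ring]
        exact hmem
  · exact Jm_exists d _

/-! ### Number theory: decomposition of large gaps -/

lemma exists_decomp (p q : ℕ) (hp : 2 ≤ p) (hq : 2 ≤ q) (hco : Nat.gcd p q = 1) (g : ℕ)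
    (hg : p * q ≤ g) : ∃ al be : ℕ, g = al * p + be * q := by
  haveI : NeZero q := ⟨by omega⟩
  set v : ZMod q := (g : ZMod q) * (p : ZMod q)⁻¹ with hv
  set al : ℕ := v.val with hal
  have halq : al < q := ZMod.val_lt v
  have hcast : ((al : ℕ) : ZMod q) = v := by simp [hal]
  have hunit : IsUnit (p : ZMod q) := (ZMod.isUnit_iff_coprime p q).2 hco
  have hzmod : ((p * al : ℕ) : ZMod q) = ((g : ℕ) : ZMod q) := by
    push_cast
    rw [hcast, hv]
    rw [show (p : ZMod q) * ((g : ZMod q) * (p : ZMod q)⁻¹)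
      = (g : ZMod q) * ((p : ZMod q) * (p : ZMod q)⁻¹) from by ring]
    rw [ZMod.mul_inv_of_unit _ hunit, mul_one]
  have hmodeq : p * al ≡ g [MOD q] := (ZMod.natCast_eq_natCast_iff _ _ _).1 hzmod
  have hle : p * al ≤ g := by
    have h1 : p * al ≤ p * (q - 1) := Nat.mul_le_mul_left p (by omega)
    have h2 : p * (q - 1) + p = p * q := by
      have : q - 1 + 1 = q := by omega
      calc p * (q - 1) + p = p * (q - 1 + 1) := by ring
      _ = p * q := by rw [this]
    omega
  obtain ⟨be, hbe⟩ := (Nat.modEq_iff_dvd' hle).1 hmodeq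
  refine ⟨al, be, ?_⟩
  have : g = p * al + q * be := by omega
  rw [this]; ring

/-! ### The tiling pattern -/

lemma per_mul {k : ℕ} {y : ℤ → Fin k} {P : ℕ} (hy : ∀ m : ℤ, y (m + (P : ℤ)) = y m) :
    ∀ (c : ℕ) (m : ℤ), y (m + (c : ℤ) * (P : ℤ)) = y m := by
  intro c
  induction c with
  | zero => intro m; simp
  | succ c ih =>
    intro m
    have : m + ((c + 1 : ℕ) : ℤ) * (P : ℤ) = (m + P) + (c : ℤ) * P := by push_cast; ring
    rw [this, ih (m + P), hy m]

lemma backward_direction (A : Finset ℕ) (hA : A.Nonempty) (hpos : ∀ a ∈ A, 0 < a)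
    (k : ℕ) (p q : ℕ) (hpN : A.max' hA + 1 < p) (hqN : A.max' hA + 1 < q)
    (hgcd : Nat.gcd p q = 1) (y₁ y₂ : ℤ → Fin k)
    (hy₁per : ∀ m : ℤ, y₁ (m + (p : ℤ)) = y₁ m)
    (hy₂per : ∀ m : ℤ, y₂ (m + (q : ℤ)) = y₂ m)
    (hy₁prop : ∀ m m' : ℤ, (m - m').natAbs ∈ A → y₁ m ≠ y₁ m')
    (hy₂prop : ∀ m m' : ℤ, (m - m').natAbs ∈ A → y₂ m ≠ y₂ m')
    (hagree : ∀ i : ℕ, i ≤ A.max' hA → y₁ (i : ℤ) = y₂ (i : ℤ)) :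
    ∃ c : Pt → Fin k, IsBorelColoring A c := by
  set N := A.max' hA with hN
  have hN1 : 1 ≤ N := hpos _ (Finset.max'_mem A hA)
  have hp2 : 2 ≤ p := by omega
  have hq2 : 2 ≤ q := by omega
  set d := p * q with hd
  have hpd : p ≤ d := Nat.le_mul_of_pos_right p (by omega)
  have hqd : q ≤ d := Nat.le_mul_of_pos_left q (by omega)
  have hNd : N < d := by omega
  have hNpZ : (N : ℤ) + 1 < p := by exact_mod_cast hpN
  have hNqZ : (N : ℤ) + 1 < q := by exact_mod_cast hqN
  have hdec' : ∀ g : ℕ, ∃ al be : ℕ, d < g → g = al * p + be * q := by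
    intro g
    by_cases h : d < g
    · obtain ⟨al, be, hab⟩ := exists_decomp p q hp2 hq2 hgcd g (by omega)
      exact ⟨al, be, fun _ => hab⟩
    · exact ⟨0, 0, fun hc => absurd hc h⟩
  choose al be hdecs using hdec'
  have hagreeZ : ∀ i : ℤ, 0 ≤ i → i ≤ N → y₁ i = y₂ i := by
    intro i h0 hN'
    have := hagree i.toNat (by omega)
    rwa [Int.toNat_of_nonneg h0] at this
  set w : ℕ → ℕ → Fin k := fun g j =>
    if (j : ℤ) < (al g : ℤ) * p then y₁ j else y₂ ((j : ℤ) - (al g : ℤ) * p) with hw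
  -- cast facts for per_mul
  have hmulp : ∀ (c : ℕ) (m : ℤ), y₁ (m + (c : ℤ) * p) = y₁ m := per_mul hy₁per
  have hmulq : ∀ (c : ℕ) (m : ℤ), y₂ (m + (c : ℤ) * q) = y₂ m := per_mul hy₂per
  -- W0 : at small indices the pattern agrees with both y₁ and y₂
  have W0 : ∀ g' i : ℕ, d < g' → i ≤ N → w g' i = y₁ (i : ℤ) ∧ w g' i = y₂ (i : ℤ) := by
    intro g' i hg' hiN
    have hiNZ : (i : ℤ) ≤ N := by exact_mod_cast hiN
    have key : w g' i = y₂ (i : ℤ) := by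
      by_cases hc : (i : ℤ) < (al g' : ℤ) * p
      · simp only [hw]
        rw [if_pos hc]
        exact hagreeZ i (by positivity) hiNZ
      · simp only [hw]
        rw [if_neg hc]
        push_neg at hc
        have hal0 : al g' = 0 := by
          by_contra h0
          have h1 : (1 : ℤ) ≤ (al g' : ℤ) := by exact_mod_cast Nat.one_le_iff_ne_zero.2 h0
          have h2 : (p : ℤ) ≤ (al g' : ℤ) * p := le_mul_of_one_le_left (by positivity) h1
          linarith
        rw [hal0]
        norm_num
    refine ⟨?_, key⟩
    rw [key]
    exact (hagreeZ i (by positivity) hiNZ).symm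
  have hAfacts : ∀ a ∈ A, 1 ≤ a ∧ a ≤ N := fun a ha => ⟨hpos a ha, Finset.le_max' A a ha⟩
  -- W1 : same gap
  have W1 : ∀ g j a : ℕ, a ∈ A → d < g → w g (j + a) ≠ w g j := by
    intro g j a ha hg
    obtain ⟨ha1, haN⟩ := hAfacts a ha
    have haNZ : (a : ℤ) ≤ N := by exact_mod_cast haN
    have ha1Z : (1 : ℤ) ≤ (a : ℤ) := by exact_mod_cast ha1
    have hcast : ((j + a : ℕ) : ℤ) = (j : ℤ) + a := by push_cast; ring
    have hnadiff : (((j : ℤ) + a) - (j : ℤ)).natAbs = a := by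
      rw [show ((j : ℤ) + a) - (j : ℤ) = (a : ℤ) from by ring, Int.natAbs_natCast]
    by_cases h1 : ((j + a : ℕ) : ℤ) < (al g : ℤ) * p
    · have h1' : (j : ℤ) < (al g : ℤ) * p := by rw [hcast] at h1; linarith
      simp only [hw]
      rw [if_pos h1, if_pos h1', hcast]
      exact hy₁prop _ _ (by rw [hnadiff]; exact ha)
    · push_neg at h1
      by_cases h2 : (j : ℤ) < (al g : ℤ) * p
      · simp only [hw]
        rw [if_neg (not_lt.2 h1), if_pos h2, hcast]
        set i : ℤ := (j : ℤ) + a - (al g : ℤ) * p with hi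
        have hi0 : 0 ≤ i := by rw [hcast] at h1; rw [hi]; linarith
        have hiN : i ≤ (N : ℤ) := by rw [hi]; linarith
        have e1 : y₂ ((j : ℤ) + a - (al g : ℤ) * p) = y₁ i := (hagreeZ i hi0 hiN).symm
        have e2 : y₁ i = y₁ ((j : ℤ) + a) := by
          rw [show (j : ℤ) + a = i + (al g : ℤ) * p from by rw [hi]; ring]
          exact (hmulp (al g) i).symm
        rw [e1, e2]
        exact hy₁prop _ _ (by rw [hnadiff]; exact ha)
      · simp only [hw]
        rw [if_neg (not_lt.2 h1), if_neg h2, hcast]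
        refine hy₂prop _ _ ?_
        rw [show ((j : ℤ) + a - (al g : ℤ) * p) - ((j : ℤ) - (al g : ℤ) * p) = (a : ℤ) from by
          ring, Int.natAbs_natCast]
        exact ha
  -- W2 : crossing a marker
  have W2 : ∀ g g' j a : ℕ, a ∈ A → d < g → d < g' → g ≤ j + a → j < g →
      w g' (j + a - g) ≠ w g j := by
    intro g g' j a ha hg hg' hga hjg
    obtain ⟨ha1, haN⟩ := hAfacts a ha
    have haNZ : (a : ℤ) ≤ N := by exact_mod_cast haN
    have ha1Z : (1 : ℤ) ≤ (a : ℤ) := by exact_mod_cast ha1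
    have hgZ : (g : ℤ) = (al g : ℤ) * p + (be g : ℤ) * q := by exact_mod_cast hdecs g hg
    have hgaZ : (g : ℤ) ≤ (j : ℤ) + a := by exact_mod_cast hga
    have hjgZ : (j : ℤ) < g := by exact_mod_cast hjg
    set i : ℕ := j + a - g with hi
    have hiZ : (i : ℤ) = (j : ℤ) + a - g := by
      rw [hi]; push_cast [hga]; ring
    have hiN : i ≤ N := by omega
    by_cases hbe : be g = 0
    · -- g = al g * p, both sides read y₁
      have hgal : (g : ℤ) = (al g : ℤ) * p := by rw [hgZ, hbe]; push_cast; ring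
      have hjlt : (j : ℤ) < (al g : ℤ) * p := by rw [← hgal]; exact hjgZ
      have e0 : w g j = y₁ (j : ℤ) := by simp only [hw]; rw [if_pos hjlt]
      have e1 : w g' i = y₁ (i : ℤ) := (W0 g' i hg' hiN).1
      rw [e0, e1]
      have e2 : y₁ (i : ℤ) = y₁ ((j : ℤ) + a) := by
        rw [show (j : ℤ) + a = (i : ℤ) + (al g : ℤ) * p from by rw [hiZ, ← hgal]; ring]
        exact (hmulp (al g) i).symm
      rw [e2]
      refine hy₁prop _ _ ?_
      rw [show ((j : ℤ) + a) - (j : ℤ) = (a : ℤ) from by ring, Int.natAbs_natCast]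
      exact ha
    · have hbe1 : (1 : ℤ) ≤ (be g : ℤ) := by exact_mod_cast Nat.one_le_iff_ne_zero.2 hbe
      have hqbe : (q : ℤ) ≤ (be g : ℤ) * q := le_mul_of_one_le_left (by positivity) hbe1
      have hjge : ¬ ((j : ℤ) < (al g : ℤ) * p) := by
        push_neg
        linarith
      have e0 : w g j = y₂ ((j : ℤ) - (al g : ℤ) * p) := by simp only [hw]; rw [if_neg hjge]
      have e1 : w g' i = y₂ (i : ℤ) := (W0 g' i hg' hiN).2
      rw [e0, e1]
      have e2 : y₂ (i : ℤ) = y₂ ((i : ℤ) + (be g : ℤ) * q) := (hmulq (be g) (i : ℤ)).symm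
      rw [e2]
      refine hy₂prop _ _ ?_
      have e3 : ((i : ℤ) + (be g : ℤ) * q) - ((j : ℤ) - (al g : ℤ) * p) = (a : ℤ) := by
        rw [hiZ]; linear_combination -hgZ
      rw [e3, Int.natAbs_natCast]
      exact ha
  -- the coloring
  refine ⟨fun x => w (Gm d x) (Jm d x), ?_, ?_⟩
  · -- measurability
    have hJlevel : ∀ n : ℕ, MeasurableSet {x : Pt | Jm d x = n} := by
      intro n
      have : {x : Pt | Jm d x = n} = (Sh (-(n : ℤ))) ⁻¹' (Mk d) ∩
          ⋂ i ∈ Finset.range n, ((Sh (-(i : ℤ))) ⁻¹' (Mk d))ᶜ := by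
        ext x
        simp only [Set.mem_setOf_eq, Set.mem_inter_iff, Set.mem_preimage, Set.mem_iInter,
          Set.mem_compl_iff, Finset.mem_range]
        rw [show Jm d x = n ↔ (n ∈ {j : ℕ | Sh (-(j : ℤ)) x ∈ Mk d} ∧
            ∀ m < n, m ∉ {j : ℕ | Sh (-(j : ℤ)) x ∈ Mk d}) from
          nat_sInf_eq (Jm_exists d x) n]
        rfl
      rw [this]
      refine (((Mk_meas d).preimage (measurable_Sh _))).inter ?_
      exact MeasurableSet.biInter (Set.to_countable _) fun i _ =>
        (((Mk_meas d).preimage (measurable_Sh _))).compl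
    have hpair : ∀ jg : ℕ × ℕ, MeasurableSet {x : Pt | Jm d x = jg.1 ∧ Gm d x = jg.2} := by
      rintro ⟨j, g⟩
      rcases Nat.eq_zero_or_pos g with hg0 | hg1
      · have : {x : Pt | Jm d x = j ∧ Gm d x = g} = ∅ := by
          ext x
          simp only [Set.mem_setOf_eq, Set.mem_empty_iff_false, iff_false, not_and]
          intro _
          have := (Gm_spec d x).1
          omega
        rw [this]; exact MeasurableSet.empty
      · have : {x : Pt | Jm d x = j ∧ Gm d x = g} = {x : Pt | Jm d x = j} ∩
            ((Sh ((g : ℤ) - (j : ℤ))) ⁻¹' (Mk d) ∩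
              ⋂ m ∈ Finset.Ico 1 g, ((Sh ((m : ℤ) - (j : ℤ))) ⁻¹' (Mk d))ᶜ) := by
          ext x
          simp only [Set.mem_setOf_eq, Set.mem_inter_iff, Set.mem_preimage, Set.mem_iInter,
            Set.mem_compl_iff, Finset.mem_Ico]
          constructor
          · rintro ⟨h1, h2⟩
            refine ⟨h1, ?_, ?_⟩
            · have := (Gm_spec d x).2
              rwa [h1, h2] at this
            · intro m hm
              have := gap_empty d x hm.1 (by omega)
              rwa [h1] at this
          · rintro ⟨h1, h2, h3⟩
            refine ⟨h1, ?_⟩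
            rw [Gm_eq_iff]
            constructor
            · exact ⟨hg1, by rwa [h1]⟩
            · rintro m hm ⟨hm1, hmem⟩
              rw [h1] at hmem
              exact h3 m ⟨hm1, hm⟩ hmem
        rw [this]
        refine (hJlevel j).inter ?_
        refine (((Mk_meas d).preimage (measurable_Sh _))).inter ?_
        exact MeasurableSet.biInter (Set.to_countable _) fun m _ =>
          (((Mk_meas d).preimage (measurable_Sh _))).compl
    have hinner : Measurable (fun x : Pt => (Jm d x, Gm d x)) := by
      apply measurable_to_countable'
      rintro ⟨j, g⟩
      have : (fun x : Pt => (Jm d x, Gm d x)) ⁻¹' {(j, g)} =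
          {x : Pt | Jm d x = j ∧ Gm d x = g} := by
        ext x
        simp [Prod.ext_iff]
      rw [this]
      exact hpair (j, g)
    exact (measurable_of_countable (fun pr : ℕ × ℕ => w pr.2 pr.1)).comp hinner
  · -- properness
    intro x a ha h
    obtain ⟨ha1, haN⟩ := hAfacts a ha
    have had : a ≤ d := by omega
    have heq : (⟨shift (a : ℤ) x.1, h⟩ : Pt) = Sh (a : ℤ) x := rfl
    rw [heq]
    simp only []
    have hg := Gm_gt d x
    have hjg := Jm_lt_Gm d x
    by_cases hcase : Jm d x + a < Gm d x
    · obtain ⟨hJ, hG⟩ := JG_step1 d x a ha1 had hcase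
      rw [hJ, hG]
      exact (W1 (Gm d x) (Jm d x) a ha hg).symm
    · push_neg at hcase
      have hJ := JG_step2 d x a ha1 had hcase
      rw [hJ]
      exact (W2 (Gm d x) (Gm d (Sh (a : ℤ) x)) (Jm d x) a ha hg
        (Gm_gt d (Sh (a : ℤ) x)) hcase hjg).symm

end BCP

/-- For `S = {±a : a ∈ A}` and `k ≥ 1`, there is a Borel proper
`k`-coloring of `G_S` on `F(2^ℤ)` iff there are `p, q > max A + 1` with `gcd(p,q) = 1`
and `p`- resp. `q`-periodic proper `S`-colorations `y₁, y₂ : ℤ → Fin k`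
agreeing on `{0, …, max A}`. -/
theorem borel_coloring_iff_two_periodic_colorations
    (A : Finset ℕ) (hA : A.Nonempty) (hpos : ∀ a ∈ A, 0 < a) (hgcd : A.gcd id = 1)
    (k : ℕ) (hk : 1 ≤ k) :
    (∃ c : {x : ℤ → Bool // x ∈ FreePart} → Fin k, IsBorelColoring A c) ↔
    (∃ p q : ℕ, A.max' hA + 1 < p ∧ A.max' hA + 1 < q ∧ Nat.gcd p q = 1 ∧
      ∃ y₁ y₂ : ℤ → Fin k,
        (∀ m : ℤ, y₁ (m + (p : ℤ)) = y₁ m) ∧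
        (∀ m : ℤ, y₂ (m + (q : ℤ)) = y₂ m) ∧
        (∀ m m' : ℤ, (m - m').natAbs ∈ A → y₁ m ≠ y₁ m') ∧
        (∀ m m' : ℤ, (m - m').natAbs ∈ A → y₂ m ≠ y₂ m') ∧
        (∀ i : ℕ, i ≤ A.max' hA → y₁ (i : ℤ) = y₂ (i : ℤ))) := by
  constructor
  · rintro ⟨c, hc⟩
    exact BCP.forward_direction A hA hpos k c hc
  · rintro ⟨p, q, hpN, hqN, hpq, y₁, y₂, h1, h2, h3, h4, h5⟩
    exact BCP.backward_direction A hA hpos k p q hpN hqN hpq y₁ y₂ h1 h2 h3 h4 h5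
end

section
/- Let S = {±a_1,…,±a_n} where 0 < a_1 < … < a_n and gcd(a_1,…,a_n) = 1. Then χ(a_1,…,a_n) ≥ κ_S + 1 ≥ λ_S + 1 ≥ 3, where κ_S is the chromatic number and λ_S is the clique number of the core graph K_S. In particular there is no Borel proper κ_S-coloring of G_S. -/
def coreGraph (A : Finset ℕ) : SimpleGraph {x : ℕ // x ∈ insert 0 A} where
  Adj u v := u ≠ v ∧ ((u.1 : ℤ) - (v.1 : ℤ)).natAbs ∈ A
  symm := by
    constructor
    rintro u v ⟨h1, h2⟩
    refine ⟨h1.symm, ?_⟩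
    have h3 : ((v.1 : ℤ) - (u.1 : ℤ)).natAbs = ((u.1 : ℤ) - (v.1 : ℤ)).natAbs := by omega
    rwa [h3]
  loopless := by constructor; rintro u ⟨h1, _⟩; exact h1 rfl

open Finset Topology Filter

namespace BCLB

theorem shift_shift {α : Type*} (s t : ℤ) (x : ℤ → α) :
    shift s (shift t x) = shift (s + t) x := by
  funext n; simp only [shift]; ring_nf

theorem shift_zero {α : Type*} (x : ℤ → α) : shift 0 x = x := by
  funext n; simp [shift]

theorem shift_mem_freePart {x : ℤ → Bool} (hx : x ∈ FreePart) (s : ℤ) :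
    shift s x ∈ FreePart := by
  intro t ht h
  have h2 : shift (t + s) x = shift s x := by rw [← shift_shift]; exact h
  have h3 : shift t x = x := by
    have := congrArg (shift (-s)) h2
    rw [shift_shift, shift_shift] at this
    have e1 : -s + (t + s) = t := by ring
    have e2 : -s + s = 0 := by ring
    rw [e1, e2, shift_zero] at this
    exact this
  exact hx t ht h3

/-- The basepoint: an explicit free point. -/
def basept : ℤ → Bool := fun n => decide (0 ≤ n)

theorem basept_mem : basept ∈ FreePart := by
  intro s hs h
  rcases lt_or_gt_of_ne hs with h1 | h1
  · have := congrFun h 0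
    simp only [shift, basept, zero_add] at this
    rw [decide_eq_decide] at this
    omega
  · have := congrFun h (-s)
    simp only [shift, basept, neg_add_cancel] at this
    rw [decide_eq_decide] at this
    omega

section Orbit

variable {A : Finset ℕ} {k : ℕ} (c : {x : ℤ → Bool // x ∈ FreePart} → Fin k)
  (x : ℤ → Bool) (hx : x ∈ FreePart)

/-- The coloring of `ℤ` induced on the orbit of `x`. -/
noncomputable def orbitCol : ℤ → Fin k := fun t => c ⟨shift t x, shift_mem_freePart hx t⟩

theorem orbitCol_proper
    (hc : ∀ (y : {x : ℤ → Bool // x ∈ FreePart}) (a : ℕ), a ∈ A →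
      ∀ (h : shift (a : ℤ) y.1 ∈ FreePart), c y ≠ c ⟨shift (a : ℤ) y.1, h⟩)
    {a : ℕ} (ha : a ∈ A) (t : ℤ) :
    orbitCol c x hx (t + a) ≠ orbitCol c x hx t := by
  intro h
  have h2 : shift (t + a) x = shift (a : ℤ) (shift t x) := by rw [shift_shift]; ring_nf
  apply hc ⟨shift t x, shift_mem_freePart hx t⟩ a ha
    (by rw [← h2]; exact shift_mem_freePart hx _)
  have h3 : c ⟨shift (↑a) (shift t x), by rw [← h2]; exact shift_mem_freePart hx _⟩
      = orbitCol c x hx (t + a) := by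
    unfold orbitCol
    exact congrArg c (Subtype.ext h2.symm)
  rw [h3, h]
  rfl

end Orbit



section Comb

variable {A : Finset ℕ} {κ : ℕ} {f : ℤ → Fin κ}

/-- A proper coloring of the orbit graph, read off in a window, colors the core graph. -/
theorem window_coloring (hf : ∀ t : ℤ, ∀ a ∈ A, f (t + a) ≠ f t) (t : ℤ) {ε : ℤ}
    (hε : ε = 1 ∨ ε = -1) {u v : {x : ℕ // x ∈ insert 0 A}} (huv : (coreGraph A).Adj u v) :
    f (t + ε * u.1) ≠ f (t + ε * v.1) := by
  obtain ⟨hne, ha⟩ := huv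
  set a : ℕ := ((u.1 : ℤ) - (v.1 : ℤ)).natAbs with hadef
  have hne' : (u.1 : ℕ) ≠ (v.1 : ℕ) := fun h => hne (Subtype.ext h)
  have hcases : (u.1 : ℤ) = v.1 + a ∨ (v.1 : ℤ) = u.1 + a := by omega
  rcases hcases with h | h
  · rcases hε with rfl | rfl
    · have : t + 1 * u.1 = (t + 1 * v.1) + a := by rw [h]; ring
      rw [this]; exact hf _ a ha
    · have : t + (-1) * v.1 = (t + (-1) * u.1) + a := by rw [h]; push_cast; ring
      rw [this]; exact (hf _ a ha).symm
  · rcases hε with rfl | rfl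
    · have : t + 1 * v.1 = (t + 1 * u.1) + a := by rw [h]; ring
      rw [this]; exact (hf _ a ha).symm
    · have : t + (-1) * u.1 = (t + (-1) * v.1) + a := by rw [h]; push_cast; ring
      rw [this]; exact hf _ a ha

/-- Rainbow lemma: every color appears in every (one-sided) core-graph window. -/
theorem rainbow (hκ : ¬ (coreGraph A).Colorable (κ - 1))
    (hf : ∀ t : ℤ, ∀ a ∈ A, f (t + a) ≠ f t) (t : ℤ) {ε : ℤ} (hε : ε = 1 ∨ ε = -1)
    (j : Fin κ) : ∃ u : {x : ℕ // x ∈ insert 0 A}, f (t + ε * u.1) = j := by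
  by_contra hcon
  push_neg at hcon
  have hκ0 : κ ≠ 0 := fun h => (h ▸ j).elim0
  obtain ⟨n, rfl⟩ : ∃ n, κ = n + 1 := ⟨κ - 1, by omega⟩
  have hn : n ≠ 0 := by
    intro h
    subst h
    have : ∀ z w : Fin (0 + 1), z = w := by decide
    exact hcon ⟨0, by simp⟩ (this _ _)
  have hd : (0 : ℕ) < n := Nat.pos_of_ne_zero hn
  apply hκ
  simp only [Nat.add_sub_cancel]
  refine ⟨SimpleGraph.Coloring.mk
    (fun u => ((finSuccEquiv' j) (f (t + ε * u.1))).getD ⟨0, hd⟩) ?_⟩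
  intro u v huv heq
  apply window_coloring hf t hε huv
  have hu := hcon u
  have hv := hcon v
  have hu' : ((finSuccEquiv' j) (f (t + ε * u.1))).isSome := by
    rw [Option.isSome_iff_ne_none]
    intro h
    have := congrArg (finSuccEquiv' j).symm h
    simp only [Equiv.symm_apply_apply, finSuccEquiv'_symm_none] at this
    exact hu this
  have hv' : ((finSuccEquiv' j) (f (t + ε * v.1))).isSome := by
    rw [Option.isSome_iff_ne_none]
    intro h
    have := congrArg (finSuccEquiv' j).symm h
    simp only [Equiv.symm_apply_apply, finSuccEquiv'_symm_none] at this
    exact hv this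
  obtain ⟨a, hau⟩ := Option.isSome_iff_exists.mp hu'
  obtain ⟨b, hbv⟩ := Option.isSome_iff_exists.mp hv'
  rw [hau, hbv, Option.getD_some, Option.getD_some] at heq
  subst heq
  exact (finSuccEquiv' j).injective (hau.trans hbv.symm)

theorem rainbow_fwd (hκ : ¬ (coreGraph A).Colorable (κ - 1))
    (hf : ∀ t : ℤ, ∀ a ∈ A, f (t + a) ≠ f t) (t : ℤ) (j : Fin κ) (hj : j ≠ f t) :
    ∃ a ∈ A, f (t + a) = j := by
  obtain ⟨u, hu⟩ := rainbow hκ hf t (Or.inl rfl) j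
  rcases Finset.mem_insert.mp u.2 with h0 | hmem
  · exfalso; apply hj; rw [← hu]; simp [h0]
  · exact ⟨u.1, hmem, by rw [← hu]; ring_nf⟩

theorem rainbow_bwd (hκ : ¬ (coreGraph A).Colorable (κ - 1))
    (hf : ∀ t : ℤ, ∀ a ∈ A, f (t + a) ≠ f t) (t : ℤ) (j : Fin κ) (hj : j ≠ f t) :
    ∃ a ∈ A, f (t - a) = j := by
  obtain ⟨u, hu⟩ := rainbow hκ hf t (Or.inr rfl) j
  rcases Finset.mem_insert.mp u.2 with h0 | hmem
  · exfalso; apply hj; rw [← hu]; simp [h0]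
  · exact ⟨u.1, hmem, by rw [← hu]; ring_nf⟩


section Periodic

variable (hA : A.Nonempty) (hpos : ∀ a ∈ A, 0 < a)
  (hκ : ¬ (coreGraph A).Colorable (κ - 1))
  (hf : ∀ t : ℤ, ∀ a ∈ A, f (t + a) ≠ f t)

/-- window-agreement predicate -/
def WinEq (hA : A.Nonempty) (f : ℤ → Fin κ) (p : ℕ) (t : ℤ) : Prop :=
  ∀ i : ℤ, 0 ≤ i → i < (A.max' hA : ℤ) → f (t + i) = f (t + p + i)

include hpos hκ hf

theorem winEq_up {p : ℕ} {t : ℤ} (h : WinEq hA f p t) : WinEq hA f p (t + 1) := by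
  set m : ℤ := (A.max' hA : ℤ) with hm
  have hm1 : 1 ≤ m := by
    have := hpos _ (A.max'_mem hA)
    omega
  intro i hi0 him
  by_cases hc : i + 1 < m
  · have := h (i + 1) (by omega) hc
    have e1 : t + (i+1) = t + 1 + i := by ring
    have e2 : t + p + (i+1) = t + 1 + p + i := by ring
    rw [e1, e2] at this
    exact this
  · -- i = m - 1 : the hard case
    have hi : i = m - 1 := by omega
    subst hi
    have e1 : t + 1 + (m - 1) = t + m := by ring
    have e2 : t + 1 + p + (m - 1) = t + p + m := by ring
    rw [e1, e2]
    by_contra hne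
    obtain ⟨a, haA, hval⟩ := rainbow_bwd hκ hf (t + m) (f (t + p + m)) (Ne.symm hne)
    have ha1 : 1 ≤ (a : ℤ) := by exact_mod_cast hpos a haA
    have ham : (a : ℤ) ≤ m := by rw [hm]; exact_mod_cast A.le_max' a haA
    have hwin := h (m - a) (by omega) (by omega)
    have e3 : t + (m - a) = t + m - a := by ring
    have e4 : t + p + (m - a) = (t + p + m - a) := by ring
    rw [e3, e4] at hwin
    have : f (t + p + m - a + a) ≠ f (t + p + m - a) := hf _ a haA
    rw [← hwin, hval] at this
    have e5 : t + p + m - a + a = t + p + m := by ring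
    rw [e5] at this
    exact this rfl

theorem winEq_down {p : ℕ} {t : ℤ} (h : WinEq hA f p t) : WinEq hA f p (t - 1) := by
  set m : ℤ := (A.max' hA : ℤ) with hm
  have hm1 : 1 ≤ m := by
    have := hpos _ (A.max'_mem hA)
    omega
  intro i hi0 him
  by_cases hc : 1 ≤ i
  · have := h (i - 1) (by omega) (by omega)
    have e1 : t + (i-1) = t - 1 + i := by ring
    have e2 : t + p + (i-1) = t - 1 + p + i := by ring
    rw [e1, e2] at this
    exact this
  · have hi : i = 0 := by omega
    subst hi
    rw [add_zero, add_zero]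
    by_contra hne
    obtain ⟨a, haA, hval⟩ := rainbow_fwd hκ hf (t - 1) (f (t - 1 + p)) (Ne.symm hne)
    have ha1 : 1 ≤ (a : ℤ) := by exact_mod_cast hpos a haA
    have ham : (a : ℤ) ≤ m := by rw [hm]; exact_mod_cast A.le_max' a haA
    have hwin := h (a - 1) (by omega) (by omega)
    have e3 : t + (a - 1) = t - 1 + a := by ring
    have e4 : t + p + (a - 1) = t - 1 + p + a := by ring
    rw [e3, e4] at hwin
    have : f (t - 1 + p + a) ≠ f (t - 1 + p) := by
      have e5 : t - 1 + p + (a:ℤ) = (t - 1 + p) + a := by ring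
      rw [e5]
      exact hf _ a haA
    rw [← hwin, hval] at this
    exact this rfl

theorem winEq_all {p : ℕ} {r : ℤ} (h : WinEq hA f p r) : ∀ t : ℤ, WinEq hA f p t := by
  have up : ∀ d : ℕ, WinEq hA f p (r + d) := by
    intro d
    induction d with
    | zero => simpa using h
    | succ e ih =>
        have := winEq_up hA hpos hκ hf ih
        have e1 : r + (e:ℤ) + 1 = r + (e+1 : ℕ) := by push_cast; ring
        rwa [e1] at this
  have down : ∀ d : ℕ, WinEq hA f p (r - d) := by
    intro d
    induction d with
    | zero => simpa using h
    | succ e ih =>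
        have := winEq_down hA hpos hκ hf ih
        have e1 : r - (e:ℤ) - 1 = r - (e+1 : ℕ) := by push_cast; ring
        rwa [e1] at this
  intro t
  by_cases hc : r ≤ t
  · have := up (t - r).toNat
    have e1 : r + ((t - r).toNat : ℤ) = t := by omega
    rwa [e1] at this
  · have := down (r - t).toNat
    have e1 : r - ((r - t).toNat : ℤ) = t := by omega
    rwa [e1] at this

/-- Every proper `κ_S`-coloring of the orbit graph on `ℤ` is periodic with period
dividing `(κ ^ max A)!`. -/
theorem period_factorial : ∀ t : ℤ, f (t + (Nat.factorial (κ ^ (A.max' hA)))) = f t := by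
  classical
  set m : ℕ := A.max' hA with hm
  have hm1 : 1 ≤ m := hpos _ (A.max'_mem hA)
  set B : ℕ := κ ^ m with hB
  have hcard : Fintype.card (Fin m → Fin κ) < Fintype.card (Fin (B + 1)) := by
    rw [Fintype.card_fun, Fintype.card_fin, Fintype.card_fin, Fintype.card_fin]
    omega
  have main : ∀ r s : Fin (B+1), (r:ℕ) < (s:ℕ) →
      ((fun i : Fin m => f (((r:ℕ):ℤ) + (i:ℕ))) = fun i : Fin m => f (((s:ℕ):ℤ) + (i:ℕ))) →
      ∀ t : ℤ, f (t + (B.factorial : ℕ)) = f t := by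
    intro r s hlt heq t
    set p : ℕ := (s:ℕ) - (r:ℕ) with hp
    have hp1 : 1 ≤ p := by omega
    have hpB : p ≤ B := by have := s.isLt; omega
    have hbase : WinEq hA f p ((r:ℕ):ℤ) := by
      intro i hi0 him
      have him' : i.toNat < m := by omega
      have hq := congrFun heq ⟨i.toNat, him'⟩
      dsimp only at hq
      have e1 : ((r:ℕ):ℤ) + ((⟨i.toNat, him'⟩ : Fin m) : ℕ) = ((r:ℕ):ℤ) + i := by
        simp; omega
      have e2 : ((s:ℕ):ℤ) + ((⟨i.toNat, him'⟩ : Fin m) : ℕ) = ((r:ℕ):ℤ) + p + i := by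
        simp; omega
      rw [e1, e2] at hq
      exact hq
    have hall := winEq_all hA hpos hκ hf hbase
    have hper : ∀ t : ℤ, f (t + p) = f t := by
      intro t
      have := hall t 0 le_rfl (by
        have : 1 ≤ (m:ℤ) := by exact_mod_cast hm1
        omega)
      simpa using this.symm
    have hmult : ∀ (e : ℕ) (t : ℤ), f (t + ((p * e : ℕ) : ℤ)) = f t := by
      intro e
      induction e with
      | zero => intro t; simp
      | succ d ih =>
          intro t
          have e1 : t + ((p * (d+1) : ℕ) : ℤ) = (t + ((p * d : ℕ) : ℤ)) + p := by
            push_cast; ring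
          rw [e1, hper, ih]
    obtain ⟨e, he⟩ := Nat.dvd_factorial hp1 hpB
    rw [he]
    exact hmult e t
  obtain ⟨r, s, hrs, hmap⟩ := Fintype.exists_ne_map_eq_of_card_lt
    (fun (r : Fin (B + 1)) => (fun i : Fin m => f (((r:ℕ):ℤ) + (i:ℕ)))) hcard
  have hne : (r:ℕ) ≠ (s:ℕ) := fun h => hrs (Fin.ext h)
  intro t
  rcases lt_or_gt_of_ne hne with h | h
  · exact main r s h hmap t
  · exact main s r h hmap.symm t

end Periodic

end Comb


section Baire

/-- The shift as a homeomorphism. -/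
def shiftHomeo (s : ℤ) : (ℤ → Bool) ≃ₜ (ℤ → Bool) where
  toFun := shift s
  invFun := shift (-s)
  left_inv := fun x => by
    rw [shift_shift]
    have : -s + s = 0 := by ring
    rw [this, shift_zero]
  right_inv := fun x => by
    rw [shift_shift]
    have : s + -s = 0 := by ring
    rw [this, shift_zero]
  continuous_toFun := continuous_pi fun n => continuous_apply (n + s)
  continuous_invFun := continuous_pi fun n => continuous_apply (n + (-s))

theorem continuous_shift (s : ℤ) : Continuous (shift (α := Bool) s) :=
  (shiftHomeo s).continuous

theorem isOpen_ne_shift (s : ℤ) : IsOpen {x : ℤ → Bool | shift s x ≠ x} := by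
  have : {x : ℤ → Bool | shift s x ≠ x} = ⋃ n : ℤ, {x : ℤ → Bool | x (n + s) ≠ x n} := by
    ext x
    simp only [Set.mem_setOf_eq, Set.mem_iUnion, Function.ne_iff]
    rfl
  rw [this]
  apply isOpen_iUnion
  intro n
  have : {x : ℤ → Bool | x (n + s) ≠ x n}
      = (fun x : ℤ → Bool => (x (n + s), x n)) ⁻¹' {p : Bool × Bool | p.1 ≠ p.2} := rfl
  rw [this]
  exact ((continuous_apply (n + s)).prodMk (continuous_apply n)).isOpen_preimage _
    (isOpen_discrete _)

theorem dense_ne_shift (s : ℤ) (hs : s ≠ 0) : Dense {x : ℤ → Bool | shift s x ≠ x} := by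
  rw [dense_iff_inter_open]
  rintro U hU ⟨x₀, hx₀⟩
  obtain ⟨I, u, hIu, hsub⟩ := isOpen_pi_iff.mp hU x₀ hx₀
  set Mn : ℕ := I.sup (fun i => i.natAbs) with hMn
  have hbound : ∀ i ∈ I, i.natAbs ≤ Mn := fun i hi => Finset.le_sup hi
  set n : ℤ := (Mn : ℤ) + 1 + s.natAbs with hn
  have hnI : n ∉ I := by
    intro h
    have := hbound n h
    omega
  have hnsI : n + s ∉ I := by
    intro h
    have := hbound (n + s) h
    omega
  have hns : n + s ≠ n := by omega
  refine ⟨Function.update x₀ n (!(x₀ (n + s))), ?_, ?_⟩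
  · apply hsub
    refine Set.mem_pi.mpr ?_
    intro i hi
    rw [Finset.mem_coe] at hi
    have hin : i ≠ n := fun h => hnI (h ▸ hi)
    rw [Function.update_of_ne hin]
    exact (hIu i hi).2
  · simp only [Set.mem_setOf_eq]
    intro h
    have hc := congrFun h n
    have h1 : shift s (Function.update x₀ n (!(x₀ (n + s)))) n
        = Function.update x₀ n (!(x₀ (n + s))) (n + s) := rfl
    have h2 : Function.update x₀ n (!(x₀ (n + s))) (n + s) = x₀ (n + s) :=
      Function.update_of_ne hns _ _
    have h3 : Function.update x₀ n (!(x₀ (n + s))) n = !(x₀ (n + s)) :=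
      Function.update_self _ _ _
    rw [h1, h2, h3] at hc
    revert hc
    cases x₀ (n + s) <;> simp

theorem freePart_residual : FreePart ∈ residual (ℤ → Bool) := by
  have : FreePart = ⋂ s : ℤ, {x : ℤ → Bool | s ≠ 0 → shift s x ≠ x} := by
    ext x
    simp only [FreePart, Set.mem_setOf_eq, Set.mem_iInter]
  rw [this]
  rw [countable_iInter_mem]
  intro s
  by_cases hs : s = 0
  · subst hs
    have : {x : ℤ → Bool | (0:ℤ) ≠ 0 → shift 0 x ≠ x} = Set.univ := by
      ext x; simp
    rw [this]
    exact Filter.univ_mem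
  · have : {x : ℤ → Bool | s ≠ 0 → shift s x ≠ x} = {x : ℤ → Bool | shift s x ≠ x} := by
      ext x; simp [hs]
    rw [this]
    exact residual_of_dense_open (isOpen_ne_shift s) (dense_ne_shift s hs)

theorem freePart_measurable : MeasurableSet FreePart := by
  have : FreePart = ⋂ s : ℤ, {x : ℤ → Bool | s ≠ 0 → shift s x ≠ x} := by
    ext x
    simp only [FreePart, Set.mem_setOf_eq, Set.mem_iInter]
  rw [this]
  apply MeasurableSet.iInter
  intro s
  by_cases hs : s = 0
  · subst hs
    have : {x : ℤ → Bool | (0:ℤ) ≠ 0 → shift 0 x ≠ x} = Set.univ := by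
      ext x; simp
    rw [this]
    exact MeasurableSet.univ
  · have : {x : ℤ → Bool | s ≠ 0 → shift s x ≠ x} = {x : ℤ → Bool | shift s x ≠ x} := by
      ext x; simp [hs]
    rw [this]
    exact (isOpen_ne_shift s).measurableSet

theorem isMeagre_shift_preimage {R : Set (ℤ → Bool)} (hR : IsMeagre R) (s : ℤ) :
    IsMeagre (shift s ⁻¹' R) :=
  hR.preimage_of_isOpenMap (continuous_shift s) (shiftHomeo s).isOpenMap

end Baire

section Main

variable {A : Finset ℕ}

theorem iter_period {κ : ℕ} {F : ℤ → Fin κ} {Q : ℕ} (h : ∀ t, F (t + Q) = F t) :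
    ∀ (e : ℕ) (t : ℤ), F (t + ((Q * e : ℕ) : ℤ)) = F t := by
  intro e
  induction e with
  | zero => intro t; simp
  | succ d ih =>
      intro t
      have e1 : t + ((Q * (d+1) : ℕ) : ℤ) = (t + ((Q * d : ℕ) : ℤ)) + Q := by push_cast; ring
      rw [e1, h, ih]

theorem no_borel_coloring (hA : A.Nonempty) (hpos : ∀ a ∈ A, 0 < a) {κ : ℕ}
    (hκc : ¬ (coreGraph A).Colorable (κ - 1)) :
    ¬ ∃ c : {x : ℤ → Bool // x ∈ FreePart} → Fin κ, IsBorelColoring A c := by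
  classical
  rintro ⟨c, hmeas, hproper⟩
  have hκ0 : κ ≠ 0 := by
    rintro rfl
    exact (c ⟨basept, basept_mem⟩).elim0
  set E : Fin κ → Set (ℤ → Bool) := fun j => Subtype.val '' (c ⁻¹' {j}) with hE
  have hEmem : ∀ (j : Fin κ) (x : ℤ → Bool),
      x ∈ E j ↔ ∃ hx : x ∈ FreePart, c ⟨x, hx⟩ = j := by
    intro j x
    constructor
    · rintro ⟨y, hy1, rfl⟩
      exact ⟨y.2, hy1⟩
    · rintro ⟨hx, hcx⟩
      exact ⟨⟨x, hx⟩, hcx, rfl⟩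
  have hcover : FreePart ⊆ ⋃ j, E j := fun x hx =>
    Set.mem_iUnion.mpr ⟨c ⟨x, hx⟩, (hEmem _ _).mpr ⟨hx, rfl⟩⟩
  have hex : ∃ j, ¬ IsMeagre (E j) := by
    by_contra hcon
    push_neg at hcon
    have hM : IsMeagre (⋃ n : ℕ, if h : n < κ then E ⟨n, h⟩ else ∅) := by
      apply isMeagre_iUnion
      intro n
      by_cases h : n < κ
      · simpa [h] using hcon ⟨n, h⟩
      · simp only [h, dif_neg, not_false_iff]
        exact IsMeagre.empty
    have hsub : FreePart ⊆ ⋃ n : ℕ, if h : n < κ then E ⟨n, h⟩ else ∅ := by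
      intro x hx
      rcases Set.mem_iUnion.mp (hcover hx) with ⟨j, hj⟩
      refine Set.mem_iUnion.mpr ⟨j.1, ?_⟩
      rw [dif_pos j.isLt]
      simpa using hj
    have hFP : IsMeagre FreePart := hM.mono hsub
    have h1 : FreePart ∩ FreePartᶜ ∈ residual (ℤ → Bool) :=
      Filter.inter_mem freePart_residual hFP
    rw [Set.inter_compl_self] at h1
    have h2 : Dense (∅ : Set (ℤ → Bool)) := dense_of_mem_residual h1
    simpa using h2.nonempty
  obtain ⟨j0, hj0⟩ := hex
  have hEmeas : MeasurableSet (E j0) :=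
    freePart_measurable.subtype_image (hmeas (measurableSet_singleton j0))
  obtain ⟨U, hUopen, hUeq⟩ := hEmeas.residualEq_isOpen
  have hUiff : {x | x ∈ E j0 ↔ x ∈ U} ∈ residual (ℤ → Bool) :=
    Filter.eventuallyEq_set.mp hUeq
  have hUne : U.Nonempty := by
    rw [Set.nonempty_iff_ne_empty]
    rintro rfl
    apply hj0
    unfold IsMeagre
    apply Filter.mem_of_superset hUiff
    intro x hx
    simp only [Set.mem_setOf_eq, Set.mem_empty_iff_false, iff_false] at hx
    exact hx
  obtain ⟨x₀, hx₀⟩ := hUne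
  obtain ⟨I, u, hIu, hsub⟩ := isOpen_pi_iff.mp hUopen x₀ hx₀
  set Cyl := {x : ℤ → Bool | ∀ i ∈ I, x i = x₀ i} with hCyl
  have hCylU : Cyl ⊆ U := by
    intro x hx
    apply hsub
    refine Set.mem_pi.mpr fun i hi => ?_
    rw [Finset.mem_coe] at hi
    rw [hx i hi]
    exact (hIu i hi).2
  have hCylOpen : IsOpen Cyl := by
    have hCeq : Cyl = ⋂ i ∈ I, {x : ℤ → Bool | x i = x₀ i} := by
      ext x; simp [hCyl]
    rw [hCeq]
    apply isOpen_biInter_finset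
    intro i _
    show IsOpen ((fun x : ℤ → Bool => x i) ⁻¹' {b : Bool | b = x₀ i})
    exact (isOpen_discrete _).preimage (continuous_apply i)
  have hR : IsMeagre (Cyl \ E j0) := by
    have h1 : Cyl \ E j0 ⊆ {x | x ∈ E j0 ↔ x ∈ U}ᶜ := by
      rintro x ⟨hx1, hx2⟩ hx3
      exact hx2 (hx3.mpr (hCylU hx1))
    have h2 : IsMeagre ({x | x ∈ E j0 ↔ x ∈ U}ᶜ) := by
      unfold IsMeagre
      rwa [compl_compl]
    exact h2.mono h1
  set R := Cyl \ E j0 with hRdef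
  set m : ℕ := A.max' hA with hm
  have hmA : m ∈ A := A.max'_mem hA
  have hm1 : 1 ≤ m := hpos m hmA
  set Q : ℕ := Nat.factorial (κ ^ m) with hQ
  have hQ1 : 1 ≤ Q := Nat.factorial_pos _
  set Mn : ℕ := I.sup (fun i => i.natAbs) with hMn
  have hbound : ∀ i ∈ I, i.natAbs ≤ Mn := fun i hi => Finset.le_sup hi
  set g : ℤ := (m : ℤ) + ((Q * (2 * Mn + 2) : ℕ) : ℤ) with hg
  have hQM : (2 * Mn + 2 : ℕ) ≤ Q * (2 * Mn + 2) := Nat.le_mul_of_pos_left _ hQ1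
  have hgbig : (2 * Mn : ℤ) < g := by
    rw [hg]
    have h9 : ((2 * Mn + 2 : ℕ) : ℤ) ≤ ((Q * (2 * Mn + 2) : ℕ) : ℤ) := Int.ofNat_le.mpr hQM
    push_cast at h9 ⊢
    omega
  set z : ℤ → Bool :=
    fun n => if n ∈ I then x₀ n else if n - g ∈ I then x₀ (n - g) else false with hz
  have hz1 : z ∈ Cyl := by
    intro i hi
    simp only [hz, if_pos hi]
  have hz2 : shift g z ∈ Cyl := by
    intro i hi
    have h2 := hbound _ hi
    have hig : i + g ∉ I := by
      intro h
      have h1 := hbound _ h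
      omega
    show z (i + g) = x₀ i
    simp only [hz, if_neg hig]
    have h3 : i + g - g ∈ I := by simpa using hi
    rw [if_pos h3]
    congr 1
    ring
  have hGood : (FreePart ∩ ⋂ t : ℤ, (shift t ⁻¹' R)ᶜ) ∈ residual (ℤ → Bool) := by
    apply Filter.inter_mem freePart_residual
    rw [countable_iInter_mem]
    intro t
    exact isMeagre_shift_preimage hR t
  have hOopen : IsOpen (Cyl ∩ shift g ⁻¹' Cyl) :=
    hCylOpen.inter (hCylOpen.preimage (continuous_shift g))
  have hOne : (Cyl ∩ shift g ⁻¹' Cyl).Nonempty := ⟨z, hz1, hz2⟩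
  obtain ⟨x, hxO, hxGood⟩ :=
    dense_iff_inter_open.mp (dense_of_mem_residual hGood) _ hOopen hOne
  obtain ⟨hxFP, hxAvoid⟩ := hxGood
  have hAvoid : ∀ t : ℤ, shift t x ∉ R := by
    intro t
    exact Set.mem_iInter.mp hxAvoid t
  obtain ⟨hx1, hx2⟩ := hxO
  have hxE : x ∈ E j0 := by
    have h0 := hAvoid 0
    rw [hRdef] at h0
    by_contra h
    apply h0
    rw [shift_zero]
    exact ⟨hx1, h⟩
  have hgE : shift g x ∈ E j0 := by
    have h0 := hAvoid g
    rw [hRdef] at h0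
    by_contra h
    exact h0 ⟨hx2, h⟩
  set F := orbitCol c x hxFP with hF
  have hFprop : ∀ t : ℤ, ∀ a ∈ A, F (t + a) ≠ F t := fun t a ha =>
    orbitCol_proper c x hxFP hproper ha t
  have hF0 : F 0 = j0 := by
    obtain ⟨hx, hcx⟩ := (hEmem j0 x).mp hxE
    have heq : F 0 = c ⟨x, hx⟩ := congrArg c (Subtype.ext (shift_zero x))
    rw [heq, hcx]
  have hFg : F g = j0 := by
    obtain ⟨hx, hcx⟩ := (hEmem j0 (shift g x)).mp hgE
    have heq : F g = c ⟨shift g x, hx⟩ := congrArg c (Subtype.ext rfl)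
    rw [heq, hcx]
  have hper := period_factorial hA hpos hκc hFprop
  have hmult := iter_period hper
  have hgm : F g = F m := by
    have : g = (m : ℤ) + ((Q * (2 * Mn + 2) : ℕ) : ℤ) := hg
    rw [this]
    exact hmult (2 * Mn + 2) m
  have hne : F ((0:ℤ) + m) ≠ F 0 := hFprop 0 m hmA
  rw [zero_add] at hne
  apply hne
  rw [← hgm, hFg, hF0]

end Main

section Graph

variable {A : Finset ℕ}

theorem coreGraph_adj (hA : A.Nonempty) (hpos : ∀ a ∈ A, 0 < a) :
    (coreGraph A).Adj ⟨0, Finset.mem_insert_self 0 A⟩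
      ⟨A.max' hA, Finset.mem_insert_of_mem (A.max'_mem hA)⟩ := by
  constructor
  · intro h
    have h2 := congrArg Subtype.val h
    have h3 := hpos _ (A.max'_mem hA)
    simp only at h2
    omega
  · have : (((0:ℕ) : ℤ) - (A.max' hA : ℤ)).natAbs = A.max' hA := by
      have h3 := hpos _ (A.max'_mem hA)
      omega
    rw [this]
    exact A.max'_mem hA

theorem coreGraph_not_colorable_one (hA : A.Nonempty) (hpos : ∀ a ∈ A, 0 < a) :
    ¬ (coreGraph A).Colorable 1 := by
  rintro ⟨C⟩
  have h1 : ∀ z w : Fin 1, z = w := by decide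
  exact C.valid (coreGraph_adj hA hpos) (h1 _ _)

theorem coreGraph_cliqueNum_ge_two (hA : A.Nonempty) (hpos : ∀ a ∈ A, 0 < a) :
    2 ≤ (coreGraph A).cliqueNum := by
  classical
  set v0 : {x : ℕ // x ∈ insert 0 A} := ⟨0, Finset.mem_insert_self 0 A⟩
  set va : {x : ℕ // x ∈ insert 0 A} :=
    ⟨A.max' hA, Finset.mem_insert_of_mem (A.max'_mem hA)⟩
  have hadj := coreGraph_adj hA hpos
  have hne : v0 ≠ va := hadj.ne
  have hclique : (coreGraph A).IsClique (↑({v0, va} : Finset {x : ℕ // x ∈ insert 0 A})) := by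
    intro a ha b hb hab
    simp only [Finset.coe_insert, Set.mem_insert_iff, Finset.coe_singleton,
      Set.mem_singleton_iff] at ha hb
    rcases ha with rfl | rfl <;> rcases hb with rfl | rfl
    · exact absurd rfl hab
    · exact hadj
    · exact hadj.symm
    · exact absurd rfl hab
  have hcard : ({v0, va} : Finset {x : ℕ // x ∈ insert 0 A}).card = 2 :=
    Finset.card_pair hne
  have := @SimpleGraph.IsClique.card_le_cliqueNum _ (coreGraph A) _ _ hclique
  omega

theorem coreGraph_cliqueNum_le_chrom :
    ((coreGraph A).cliqueNum : ℕ∞) ≤ (coreGraph A).chromaticNumber := by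
  classical
  obtain ⟨s, hs⟩ := (coreGraph A).exists_isNClique_cliqueNum
  have h1 := hs.1.card_le_chromaticNumber
  rw [hs.2] at h1
  exact h1

theorem colorable_of_borel (hA : A.Nonempty) (hpos : ∀ a ∈ A, 0 < a) {k : ℕ}
    (hex : ∃ c : {x : ℤ → Bool // x ∈ FreePart} → Fin k, IsBorelColoring A c) :
    (coreGraph A).Colorable k := by
  obtain ⟨c, hmeas, hproper⟩ := hex
  set F := orbitCol c basept basept_mem with hF
  have hFprop : ∀ t : ℤ, ∀ a ∈ A, F (t + a) ≠ F t := fun t a ha =>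
    orbitCol_proper c basept basept_mem hproper ha t
  refine ⟨SimpleGraph.Coloring.mk (fun u => F (u.1 : ℤ)) ?_⟩
  intro u v huv
  have := window_coloring hFprop 0 (Or.inl rfl) huv
  have e1 : (0:ℤ) + 1 * (u.1:ℤ) = (u.1:ℤ) := by ring
  have e2 : (0:ℤ) + 1 * (v.1:ℤ) = (v.1:ℤ) := by ring
  rwa [e1, e2] at this

end Graph

section Construction

variable (A : Finset ℕ)

/-- The symmetric generating set. -/
def Sgen : Finset ℤ := A.image (fun a : ℕ => (a : ℤ)) ∪ A.image (fun a : ℕ => -(a : ℤ))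

variable (hpos : ∀ a ∈ A, 0 < a)

theorem Sgen_spec {s : ℤ} (hs : s ∈ Sgen A) (hpos : ∀ a ∈ A, 0 < a) :
    s ≠ 0 ∧ s.natAbs ∈ A := by
  simp only [Sgen, Finset.mem_union, Finset.mem_image] at hs
  rcases hs with ⟨a, ha, rfl⟩ | ⟨a, ha, rfl⟩
  · have := hpos a ha
    constructor
    · omega
    · simpa using ha
  · have := hpos a ha
    constructor
    · omega
    · simpa using ha

theorem coe_mem_Sgen {a : ℕ} (ha : a ∈ A) : (a : ℤ) ∈ Sgen A := by
  simp only [Sgen, Finset.mem_union, Finset.mem_image]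
  exact Or.inl ⟨a, ha, rfl⟩

theorem neg_mem_Sgen {s : ℤ} (hs : s ∈ Sgen A) : -s ∈ Sgen A := by
  simp only [Sgen, Finset.mem_union, Finset.mem_image] at hs ⊢
  rcases hs with ⟨a, ha, rfl⟩ | ⟨a, ha, h⟩
  · exact Or.inr ⟨a, ha, rfl⟩
  · exact Or.inl ⟨a, ha, by omega⟩

theorem Sgen_card : (Sgen A).card ≤ 2 * A.card := by
  calc (Sgen A).card ≤ (A.image (fun a : ℕ => (a : ℤ))).card + (A.image (fun a : ℕ => -(a : ℤ))).card :=
        Finset.card_union_le _ _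
  _ ≤ A.card + A.card := Nat.add_le_add Finset.card_image_le Finset.card_image_le
  _ = 2 * A.card := by ring

theorem natAbs_le_sup {s : ℤ} (hs : s ∈ Sgen A) (hpos : ∀ a ∈ A, 0 < a) :
    s.natAbs ≤ A.sup id := by
  exact Finset.le_sup (f := id) (Sgen_spec A hs hpos).2

/-- The neighbor map. -/
def nbr (s : ℤ) (x : {x : ℤ → Bool // x ∈ FreePart}) : {x : ℤ → Bool // x ∈ FreePart} :=
  ⟨shift s x.1, shift_mem_freePart x.2 s⟩

theorem nbr_nbr (s : ℤ) (x : {x : ℤ → Bool // x ∈ FreePart}) : nbr (-s) (nbr s x) = x := by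
  apply Subtype.ext
  show shift (-s) (shift s x.1) = x.1
  rw [shift_shift]
  have : -s + s = 0 := by ring
  rw [this, shift_zero]

/-- local difference witness within window `M`. -/
def Dpred (M : ℕ) (x : {x : ℤ → Bool // x ∈ FreePart}) : Prop :=
  ∀ s ∈ Sgen A, ∃ i ∈ Finset.Icc (-(M : ℤ)) (M : ℤ), x.1 (i + s) ≠ x.1 i

noncomputable instance (M : ℕ) (x : {x : ℤ → Bool // x ∈ FreePart}) : Decidable (Dpred A M x) := by
  unfold Dpred
  infer_instance

theorem Dpred_exists (hpos : ∀ a ∈ A, 0 < a) (x : {x : ℤ → Bool // x ∈ FreePart}) :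
    ∃ M, Dpred A M x := by
  classical
  set w : ℤ → ℕ := fun s =>
    if h : ∃ i : ℤ, x.1 (i + s) ≠ x.1 i then (Classical.choose h).natAbs else 0 with hw
  refine ⟨(Sgen A).sup w, ?_⟩
  intro s hs
  have hne : shift s x.1 ≠ x.1 := x.2 s (Sgen_spec A hs hpos).1
  have hex : ∃ i : ℤ, x.1 (i + s) ≠ x.1 i := by
    obtain ⟨i, hi⟩ := Function.ne_iff.mp hne
    exact ⟨i, hi⟩
  refine ⟨Classical.choose hex, ?_, Classical.choose_spec hex⟩
  rw [Finset.mem_Icc]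
  have h1 : w s = (Classical.choose hex).natAbs := by rw [hw]; simp [hex]
  have h2 : w s ≤ (Sgen A).sup w := Finset.le_sup hs
  omega

end Construction
section Construction2

variable (A : Finset ℕ) (hpos : ∀ a ∈ A, 0 < a)

/-- The priority level of a point. -/
noncomputable def mdep (hpos : ∀ a ∈ A, 0 < a) (x : {x : ℤ → Bool // x ∈ FreePart}) : ℕ :=
  Nat.find (Dpred_exists A hpos x)

theorem mdep_spec (x : {x : ℤ → Bool // x ∈ FreePart}) : Dpred A (mdep A hpos x) x :=
  Nat.find_spec (Dpred_exists A hpos x)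

theorem mdep_min {x : {x : ℤ → Bool // x ∈ FreePart}} {k : ℕ} (hk : k < mdep A hpos x) :
    ¬ Dpred A k x :=
  Nat.find_min (Dpred_exists A hpos x) hk

/-- The window word of a point, as a list. -/
noncomputable def winlist (x : {x : ℤ → Bool // x ∈ FreePart}) : List Bool :=
  (List.range (2 * mdep A hpos x + 1)).map (fun j : ℕ => x.1 ((j : ℤ) - (mdep A hpos x : ℤ)))

/-- The countable proper coloring. -/
noncomputable def cnat (x : {x : ℤ → Bool // x ∈ FreePart}) : ℕ :=
  Nat.pair (mdep A hpos x) (Encodable.encode (winlist A hpos x))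

theorem map_range_inj {n : ℕ} {f g : ℕ → Bool}
    (h : (List.range n).map f = (List.range n).map g) : ∀ j < n, f j = g j := by
  intro j hj
  have hl1 : j < ((List.range n).map f).length := by simpa using hj
  have hl2 : j < ((List.range n).map g).length := by simpa using hj
  have h1 : ((List.range n).map f)[j]'hl1 = ((List.range n).map g)[j]'hl2 :=
    List.getElem_of_eq h _
  simpa using h1

theorem cnat_eq (x y : {x : ℤ → Bool // x ∈ FreePart}) (h : cnat A hpos x = cnat A hpos y) :
    mdep A hpos x = mdep A hpos y ∧
      ∀ i : ℤ, i.natAbs ≤ mdep A hpos x → x.1 i = y.1 i := by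
  unfold cnat at h
  have h1 : mdep A hpos x = mdep A hpos y ∧
      Encodable.encode (winlist A hpos x) = Encodable.encode (winlist A hpos y) := by
    constructor
    · have := congrArg (fun n => n.unpair.1) h
      simpa using this
    · have := congrArg (fun n => n.unpair.2) h
      simpa using this
  obtain ⟨hm, he⟩ := h1
  refine ⟨hm, ?_⟩
  have hw : winlist A hpos x = winlist A hpos y := Encodable.encode_injective he
  unfold winlist at hw
  rw [← hm] at hw
  have := map_range_inj hw
  intro i hi
  have hj : (i + mdep A hpos x).toNat < 2 * mdep A hpos x + 1 := by omega
  have h2 := this (i + mdep A hpos x).toNat hj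
  have e1 : (((i + mdep A hpos x).toNat : ℤ)) - (mdep A hpos x : ℤ) = i := by omega
  rw [e1] at h2
  exact h2

theorem cnat_proper {x : {x : ℤ → Bool // x ∈ FreePart}} {s : ℤ} (hs : s ∈ Sgen A) :
    cnat A hpos x ≠ cnat A hpos (nbr s x) := by
  intro h
  obtain ⟨hm, hwin⟩ := cnat_eq A hpos x (nbr s x) h
  obtain ⟨i, hi, hne⟩ := mdep_spec A hpos x s hs
  rw [Finset.mem_Icc] at hi
  apply hne
  have h1 : x.1 i = (nbr s x).1 i := hwin i (by omega)
  have h2 : (nbr s x).1 i = x.1 (i + s) := rfl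
  rw [h1, h2]

end Construction2

section Construction3

variable (A : Finset ℕ) (hpos : ∀ a ∈ A, 0 < a)

/-- number of colors -/
def Kcol : ℕ := 2 * A.card + 1

/-- pick the least color avoiding a set of colors -/
def greedyStep (ex : Finset (Fin (Kcol A))) : Fin (Kcol A) :=
  if h : (Finset.univ \ ex).Nonempty then (Finset.univ \ ex).min' h
  else ⟨0, Nat.succ_pos _⟩

theorem greedyStep_not_mem {ex : Finset (Fin (Kcol A))} (h : ex.card < Kcol A) :
    greedyStep A ex ∉ ex := by
  have hne : (Finset.univ \ ex).Nonempty := by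
    rw [← Finset.card_pos, Finset.card_sdiff_of_subset (Finset.subset_univ ex)]
    simp only [Finset.card_univ, Fintype.card_fin]
    omega
  rw [greedyStep, dif_pos hne]
  have := Finset.min'_mem _ hne
  rw [Finset.mem_sdiff] at this
  exact this.2

/-- the exclusion set at level `n` for point `x`, given colors from level `n` -/
noncomputable def exSet (x : {x : ℤ → Bool // x ∈ FreePart})
    (prev : {x : ℤ → Bool // x ∈ FreePart} → Fin (Kcol A)) : Finset (Fin (Kcol A)) :=
  ((Sgen A).filter (fun s => cnat A hpos (nbr s x) < cnat A hpos x)).image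
    (fun s => prev (nbr s x))

theorem exSet_card (x : {x : ℤ → Bool // x ∈ FreePart})
    (prev : {x : ℤ → Bool // x ∈ FreePart} → Fin (Kcol A)) :
    (exSet A hpos x prev).card < Kcol A := by
  have h1 : (exSet A hpos x prev).card ≤ (Sgen A).card :=
    Finset.card_image_le.trans (Finset.card_le_card (Finset.filter_subset _ _))
  have h2 := Sgen_card A
  have h3 : Kcol A = 2 * A.card + 1 := rfl
  omega

/-- greedy coloring by recursion on priority level -/
noncomputable def colAt : ℕ → {x : ℤ → Bool // x ∈ FreePart} → Fin (Kcol A)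
  | 0, _ => greedyStep A ∅
  | (n + 1), x => greedyStep A (exSet A hpos x (colAt n))

theorem colAt_stab : ∀ n (x : {x : ℤ → Bool // x ∈ FreePart}), cnat A hpos x ≤ n →
    colAt A hpos (n + 1) x = colAt A hpos n x := by
  intro n
  induction n with
  | zero =>
      intro x hx
      show greedyStep A (exSet A hpos x (colAt A hpos 0)) = greedyStep A ∅
      congr 1
      rw [exSet]
      have : (Sgen A).filter (fun s => cnat A hpos (nbr s x) < cnat A hpos x) = ∅ := by
        apply Finset.filter_false_of_mem
        intro s _
        omega
      rw [this, Finset.image_empty]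
  | succ n ih =>
      intro x hx
      show greedyStep A (exSet A hpos x (colAt A hpos (n+1)))
          = greedyStep A (exSet A hpos x (colAt A hpos n))
      congr 1
      rw [exSet, exSet]
      apply Finset.image_congr
      intro s hs
      rw [Finset.coe_filter, Set.mem_setOf_eq] at hs
      exact ih (nbr s x) (by omega)

theorem colAt_stab' : ∀ n (x : {x : ℤ → Bool // x ∈ FreePart}), cnat A hpos x < n →
    colAt A hpos n x = colAt A hpos (cnat A hpos x + 1) x := by
  intro n
  induction n with
  | zero => intro x hx; omega
  | succ n ih =>
      intro x hx
      by_cases h : cnat A hpos x = n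
      · rw [h]
      · have h1 : cnat A hpos x ≤ n := by omega
        rw [colAt_stab A hpos n x h1]
        exact ih x (by omega)

/-- The Borel coloring. -/
noncomputable def borelCol (x : {x : ℤ → Bool // x ∈ FreePart}) : Fin (Kcol A) :=
  colAt A hpos (cnat A hpos x + 1) x

theorem borelCol_aux {x : {x : ℤ → Bool // x ∈ FreePart}} {s : ℤ} (hs : s ∈ Sgen A)
    (hlt : cnat A hpos (nbr s x) < cnat A hpos x) :
    borelCol A hpos (nbr s x) ≠ borelCol A hpos x := by
  intro h
  have h1 : borelCol A hpos x = greedyStep A (exSet A hpos x (colAt A hpos (cnat A hpos x))) :=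
    rfl
  have h2 : colAt A hpos (cnat A hpos x) (nbr s x)
      ∈ exSet A hpos x (colAt A hpos (cnat A hpos x)) := by
    rw [exSet]
    apply Finset.mem_image_of_mem
    rw [Finset.mem_filter]
    exact ⟨hs, hlt⟩
  have h3 : colAt A hpos (cnat A hpos x) (nbr s x) = borelCol A hpos (nbr s x) := by
    rw [borelCol, ← colAt_stab' A hpos (cnat A hpos x) (nbr s x) hlt]
  rw [h3, h] at h2
  exact greedyStep_not_mem A (exSet_card A hpos x _) h2

theorem borelCol_proper {x : {x : ℤ → Bool // x ∈ FreePart}} {s : ℤ} (hs : s ∈ Sgen A) :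
    borelCol A hpos (nbr s x) ≠ borelCol A hpos x := by
  rcases lt_trichotomy (cnat A hpos (nbr s x)) (cnat A hpos x) with h | h | h
  · exact borelCol_aux A hpos hs h
  · exact absurd h.symm (cnat_proper A hpos hs)
  · have h1 := borelCol_aux A hpos (neg_mem_Sgen A hs) (x := nbr s x) (by rw [nbr_nbr]; exact h)
    rw [nbr_nbr] at h1
    exact (Ne.symm h1)

end Construction3

section Construction4

variable (A : Finset ℕ) (hpos : ∀ a ∈ A, 0 < a)
include hpos

theorem Dpred_transfer {k W : ℕ} {x y : {x : ℤ → Bool // x ∈ FreePart}}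
    (hk : k + A.sup id ≤ W) (hagree : ∀ i : ℤ, i.natAbs ≤ W → x.1 i = y.1 i)
    (hD : Dpred A k x) : Dpred A k y := by
  intro s hs
  obtain ⟨i, hi, hne⟩ := hD s hs
  rw [Finset.mem_Icc] at hi
  refine ⟨i, by rw [Finset.mem_Icc]; omega, ?_⟩
  have hsb := natAbs_le_sup A hs hpos
  have h1 : x.1 i = y.1 i := hagree i (by omega)
  have h2 : x.1 (i + s) = y.1 (i + s) := hagree (i + s) (by omega)
  rw [← h1, ← h2]
  exact hne

theorem cnat_determined {n : ℕ} {x y : {x : ℤ → Bool // x ∈ FreePart}}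
    (hagree : ∀ i : ℤ, i.natAbs ≤ n + A.sup id → x.1 i = y.1 i)
    (hx : cnat A hpos x = n) : cnat A hpos y = n := by
  have hμn : mdep A hpos x ≤ n := by
    rw [← hx]
    exact Nat.left_le_pair _ _
  have hmy : mdep A hpos y = mdep A hpos x := by
    rw [mdep, Nat.find_eq_iff]
    constructor
    · exact Dpred_transfer A hpos (W := n + A.sup id) (by omega) hagree
        (mdep_spec A hpos x)
    · intro k hk hD
      apply mdep_min A hpos hk
      exact Dpred_transfer A hpos (W := n + A.sup id) (by omega)
        (fun i hi => (hagree i hi).symm) hD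
  have hwin : winlist A hpos y = winlist A hpos x := by
    unfold winlist
    rw [hmy]
    apply List.map_congr_left
    intro j hj
    rw [List.mem_range] at hj
    have : ((j : ℤ) - (mdep A hpos x : ℤ)).natAbs ≤ n + A.sup id := by omega
    exact (hagree _ this).symm
  rw [← hx]
  unfold cnat
  rw [hmy, hwin]

theorem cnat_lt_determined {t : ℕ} {x y : {x : ℤ → Bool // x ∈ FreePart}}
    (hagree : ∀ i : ℤ, i.natAbs ≤ t + A.sup id → x.1 i = y.1 i)
    (hx : cnat A hpos x < t) : cnat A hpos y < t := by
  have := cnat_determined A hpos (n := cnat A hpos x)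
    (fun i hi => hagree i (by omega)) rfl
  omega

theorem colAt_determined : ∀ (d n : ℕ) (x y : {x : ℤ → Bool // x ∈ FreePart}),
    cnat A hpos x ≤ n → cnat A hpos y ≤ n →
    (∀ i : ℤ, i.natAbs ≤ (d + 1) * (n + 2 * A.sup id + 1) → x.1 i = y.1 i) →
    colAt A hpos d x = colAt A hpos d y := by
  intro d
  induction d with
  | zero => intro n x y _ _ _; rfl
  | succ d ih =>
      intro n x y hx hy hagree
      set W : ℕ := (d + 2) * (n + 2 * A.sup id + 1) with hW
      have hWagree : ∀ i : ℤ, i.natAbs ≤ W → x.1 i = y.1 i := by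
        intro i hi
        apply hagree
        calc i.natAbs ≤ W := hi
        _ = (d + 1 + 1) * (n + 2 * A.sup id + 1) := by rw [hW]
      have hc : cnat A hpos y = cnat A hpos x := by
        apply cnat_determined A hpos (n := cnat A hpos x) _ rfl
        intro i hi
        apply hWagree
        have : W ≥ cnat A hpos x + A.sup id := by
          have h8 : n + 2 * A.sup id + 1 ≤ W := by
            rw [hW]; exact Nat.le_mul_of_pos_left _ (by omega)
          omega
        omega
      have hnbr : ∀ s ∈ Sgen A, ∀ i : ℤ, i.natAbs ≤ W - A.sup id →
          (nbr s x).1 i = (nbr s y).1 i := by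
        intro s hs i hi
        have hsb := natAbs_le_sup A hs hpos
        have hWge : n + 2 * A.sup id + 1 ≤ W := by
          rw [hW]; exact Nat.le_mul_of_pos_left _ (by omega)
        show x.1 (i + s) = y.1 (i + s)
        apply hWagree
        omega
      have hfil : (Sgen A).filter (fun s => cnat A hpos (nbr s x) < cnat A hpos x)
          = (Sgen A).filter (fun s => cnat A hpos (nbr s y) < cnat A hpos y) := by
        apply Finset.filter_congr
        intro s hs
        have hWge : n + 2 * A.sup id + 1 ≤ W := by
          rw [hW]; exact Nat.le_mul_of_pos_left _ (by omega)
        rw [hc]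
        constructor
        · intro h
          apply cnat_lt_determined A hpos (t := cnat A hpos x) _ h
          intro i hi
          apply hnbr s hs
          omega
        · intro h
          apply cnat_lt_determined A hpos (t := cnat A hpos x) _ h
          intro i hi
          exact (hnbr s hs i (by omega)).symm
      show greedyStep A (exSet A hpos x (colAt A hpos d))
          = greedyStep A (exSet A hpos y (colAt A hpos d))
      congr 1
      rw [exSet, exSet, hfil]
      apply Finset.image_congr
      intro s hs
      rw [Finset.coe_filter, Set.mem_setOf_eq] at hs
      obtain ⟨hsS, hslt⟩ := hs
      rw [hc] at hslt
      have hsx : cnat A hpos (nbr s x) < cnat A hpos x := by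
        apply cnat_lt_determined A hpos (t := cnat A hpos x) _ hslt
        intro i hi
        apply (hnbr s hsS i _).symm
        have hWge : n + 2 * A.sup id + 1 ≤ W := by
          rw [hW]; exact Nat.le_mul_of_pos_left _ (by omega)
        omega
      apply ih n (nbr s x) (nbr s y) (by omega) (by omega)
      intro i hi
      apply hnbr s hsS
      have hWk : (d + 1) * (n + 2 * A.sup id + 1) + (n + 2 * A.sup id + 1) = W := by ring
      omega

omit hpos in
theorem measurable_of_determined {β : Type*} [MeasurableSpace β] [MeasurableSingletonClass β]
    [Countable β] (f : {x : ℤ → Bool // x ∈ FreePart} → β)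
    (h : ∀ b : β, ∃ M : ℕ, ∀ x y : {x : ℤ → Bool // x ∈ FreePart},
      (∀ i : ℤ, i.natAbs ≤ M → x.1 i = y.1 i) → f x = b → f y = b) :
    Measurable f := by
  apply measurable_to_countable'
  intro b
  obtain ⟨M, hM⟩ := h b
  classical
  have hset : f ⁻¹' {b} = ⋃ w : ({i : ℤ // i ∈ Finset.Icc (-(M : ℤ)) (M : ℤ)} → Bool),
      {x : {x : ℤ → Bool // x ∈ FreePart} |
        (∀ i : {i : ℤ // i ∈ Finset.Icc (-(M : ℤ)) (M : ℤ)}, x.1 i.1 = w i) ∧ f x = b} := by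
    ext x
    simp only [Set.mem_preimage, Set.mem_singleton_iff, Set.mem_iUnion, Set.mem_setOf_eq]
    constructor
    · intro hx
      exact ⟨fun i => x.1 i.1, fun i => rfl, hx⟩
    · rintro ⟨w, _, hx⟩
      exact hx
  rw [hset]
  apply MeasurableSet.iUnion
  intro w
  by_cases hw : ∃ x : {x : ℤ → Bool // x ∈ FreePart},
      (∀ i : {i : ℤ // i ∈ Finset.Icc (-(M : ℤ)) (M : ℤ)}, x.1 i.1 = w i) ∧ f x = b
  · obtain ⟨x0, hx0w, hx0b⟩ := hw
    have heq : {x : {x : ℤ → Bool // x ∈ FreePart} |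
        (∀ i : {i : ℤ // i ∈ Finset.Icc (-(M : ℤ)) (M : ℤ)}, x.1 i.1 = w i) ∧ f x = b}
        = {x : {x : ℤ → Bool // x ∈ FreePart} |
            ∀ i : {i : ℤ // i ∈ Finset.Icc (-(M : ℤ)) (M : ℤ)}, x.1 i.1 = w i} := by
      ext y
      simp only [Set.mem_setOf_eq, and_iff_left_iff_imp]
      intro hyw
      apply hM x0 y _ hx0b
      intro i hi
      have hmem : i ∈ Finset.Icc (-(M : ℤ)) (M : ℤ) := by rw [Finset.mem_Icc]; omega
      rw [hx0w ⟨i, hmem⟩, hyw ⟨i, hmem⟩]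
    rw [heq]
    have heq2 : {x : {x : ℤ → Bool // x ∈ FreePart} |
        ∀ i : {i : ℤ // i ∈ Finset.Icc (-(M : ℤ)) (M : ℤ)}, x.1 i.1 = w i}
        = ⋂ i : {i : ℤ // i ∈ Finset.Icc (-(M : ℤ)) (M : ℤ)},
            (fun x : {x : ℤ → Bool // x ∈ FreePart} => x.1 i.1) ⁻¹' {w i} := by
      ext y
      simp [Set.mem_iInter]
    rw [heq2]
    apply MeasurableSet.iInter
    intro i
    exact ((measurable_pi_apply i.1).comp measurable_subtype_coe)
      (measurableSet_singleton (w i))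
  · have heq : {x : {x : ℤ → Bool // x ∈ FreePart} |
        (∀ i : {i : ℤ // i ∈ Finset.Icc (-(M : ℤ)) (M : ℤ)}, x.1 i.1 = w i) ∧ f x = b}
        = ∅ := by
      rw [Set.eq_empty_iff_forall_notMem]
      intro x hx
      exact hw ⟨x, hx⟩
    rw [heq]
    exact MeasurableSet.empty

theorem borelCol_measurable : Measurable (borelCol A hpos) := by
  have hpair : Measurable (fun x => (cnat A hpos x, borelCol A hpos x)) := by
    apply measurable_of_determined
    rintro ⟨n, col⟩
    refine ⟨(n + 1 + 1) * (n + 2 * A.sup id + 1) + n + A.sup id, ?_⟩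
    rintro x y hagree hx
    have hx1 : cnat A hpos x = n := congrArg Prod.fst hx
    have hx2 : colAt A hpos (n + 1) x = col := by
      have := congrArg Prod.snd hx
      simp only at this
      rw [← this, borelCol, hx1]
    have hy1 : cnat A hpos y = n :=
      cnat_determined A hpos (fun i hi => hagree i (by omega)) hx1
    have hy2 : colAt A hpos (n + 1) y = col := by
      rw [← hx2]
      apply (colAt_determined A hpos (n + 1) n y x (by omega) (by omega) _)
      intro i hi
      exact (hagree i (by omega)).symm
    have : borelCol A hpos y = col := by
      rw [borelCol, hy1, hy2]
    rw [hy1, this]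
  exact measurable_snd.comp hpair

theorem exists_borel_coloring' (hA : A.Nonempty) :
    ∃ (k : ℕ) (c : {x : ℤ → Bool // x ∈ FreePart} → Fin k), IsBorelColoring A c := by
  refine ⟨Kcol A, borelCol A hpos, borelCol_measurable A hpos, ?_⟩
  intro x a ha h
  have h1 : (⟨shift (a : ℤ) x.1, h⟩ : {x : ℤ → Bool // x ∈ FreePart}) = nbr (a : ℤ) x :=
    Subtype.ext rfl
  rw [h1]
  exact (borelCol_proper A hpos (coe_mem_Sgen A ha)).symm

end Construction4

/-- Upper bound: some Borel coloring exists. -/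
theorem exists_borel_coloring (A : Finset ℕ) (hA : A.Nonempty) (hpos : ∀ a ∈ A, 0 < a) :
    ∃ (k : ℕ) (c : {x : ℤ → Bool // x ∈ FreePart} → Fin k), IsBorelColoring A c :=
  exists_borel_coloring' A hpos hA

end BCLB

/-- `χ(a₁,…,aₙ) ≥ κ_S + 1 ≥ λ_S + 1 ≥ 3`, where `κ_S` is the
chromatic number and `λ_S` the clique number of the core graph `K_S`. In particular
there is no Borel proper `κ_S`-coloring of `G_S`. -/
theorem borelChromatic_lower_bound
    (A : Finset ℕ) (hA : A.Nonempty) (hpos : ∀ a ∈ A, 0 < a) (hgcd : A.gcd id = 1) :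
    (3 : ℕ∞) ≤ ((coreGraph A).cliqueNum : ℕ∞) + 1 ∧
    ((coreGraph A).cliqueNum : ℕ∞) + 1 ≤ (coreGraph A).chromaticNumber + 1 ∧
    (coreGraph A).chromaticNumber + 1 ≤ (borelChromatic A : ℕ∞) ∧
    ∀ k : ℕ, (k : ℕ∞) = (coreGraph A).chromaticNumber →
      ¬ ∃ c : {x : ℤ → Bool // x ∈ FreePart} → Fin k, IsBorelColoring A c := by
  classical
  haveI : Fintype {x : ℕ // x ∈ insert 0 A} := FinsetCoe.fintype _
  have hfin : (coreGraph A).Colorable (Fintype.card {x : ℕ // x ∈ insert 0 A}) :=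
    SimpleGraph.colorable_of_fintype _
  have hne : (coreGraph A).chromaticNumber ≠ ⊤ :=
    SimpleGraph.chromaticNumber_ne_top_iff_exists.mpr ⟨_, hfin⟩
  obtain ⟨κn, hκn'⟩ := WithTop.ne_top_iff_exists.mp hne
  have hκn : ((κn : ℕ) : ℕ∞) = (coreGraph A).chromaticNumber := by
    rw [← hκn']
    rfl
  have hcolκ : (coreGraph A).Colorable κn :=
    SimpleGraph.chromaticNumber_le_iff_colorable.mp (le_of_eq hκn.symm)
  have hκ2 : 2 ≤ κn := by
    by_contra h
    push_neg at h
    exact BCLB.coreGraph_not_colorable_one hA hpos (hcolκ.mono (by omega))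
  have hnotcol : ¬ (coreGraph A).Colorable (κn - 1) := by
    intro h
    have h1 : (coreGraph A).chromaticNumber ≤ (κn - 1 : ℕ) := h.chromaticNumber_le
    rw [← hκn] at h1
    have h2 : κn ≤ κn - 1 := by exact_mod_cast h1
    omega
  have key : ∀ k : ℕ,
      (∃ c : {x : ℤ → Bool // x ∈ FreePart} → Fin k, IsBorelColoring A c) → κn + 1 ≤ k := by
    intro k hex
    have h1 : κn ≤ k := by
      have := (BCLB.colorable_of_borel hA hpos hex).chromaticNumber_le
      rw [← hκn] at this
      exact_mod_cast this
    have h2 : k ≠ κn := by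
      rintro rfl
      exact BCLB.no_borel_coloring hA hpos hnotcol hex
    omega
  refine ⟨?_, ?_, ?_, ?_⟩
  · have h1 : (2 : ℕ∞) ≤ ((coreGraph A).cliqueNum : ℕ∞) := by
      exact_mod_cast BCLB.coreGraph_cliqueNum_ge_two hA hpos
    calc (3 : ℕ∞) = 2 + 1 := by norm_num
    _ ≤ ((coreGraph A).cliqueNum : ℕ∞) + 1 := add_le_add_left h1 1
  · exact add_le_add_left BCLB.coreGraph_cliqueNum_le_chrom 1
  · obtain ⟨k0, c0, hc0⟩ := BCLB.exists_borel_coloring A hA hpos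
    have hSne : {k : ℕ | ∃ c : {x : ℤ → Bool // x ∈ FreePart} → Fin k,
        IsBorelColoring A c}.Nonempty := ⟨k0, c0, hc0⟩
    have hlb : κn + 1 ≤ borelChromatic A := le_csInf hSne key
    rw [← hκn]
    have : ((κn + 1 : ℕ) : ℕ∞) ≤ ((borelChromatic A : ℕ)  : ℕ∞) := by
      exact_mod_cast hlb
    calc (κn : ℕ∞) + 1 = ((κn + 1 : ℕ) : ℕ∞) := by push_cast; ring
    _ ≤ _ := this
  · intro k hk
    have hkn : k = κn := by
      rw [← hκn] at hk
      exact_mod_cast hk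
    subst hkn
    exact BCLB.no_borel_coloring hA hpos hnotcol
end

section
/- Let S = {±a_1,…,±a_n} where 0 < a_1 < … < a_n and gcd(a_1,…,a_n) = 1, let ℓ = a_n + 1, and let k = κ_S be the chromatic number of the core graph K_S. For any m ≥ ℓ, if c and c' are proper S-colorations of the integer interval {0, 1, …, ℓ+m−1} with values in Fin k, and c(i) = c'(i) for all 0 ≤ i < ℓ, then c = c'. -/
/-- With `ℓ = aₙ + 1` and `k = κ_S` the chromatic number of the core
graph `K_S`: any proper `S`-coloration of the integer interval `{0, …, ℓ+m-1}` with `k`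
colors (`m ≥ ℓ`) is determined by its restriction to `{0, …, ℓ-1}`. -/
theorem coloration_determined_by_initial_segment
    (A : Finset ℕ) (hA : A.Nonempty) (hpos : ∀ a ∈ A, 0 < a) (hgcd : A.gcd id = 1)
    (k : ℕ) (hk : (k : ℕ∞) = (coreGraph A).chromaticNumber)
    (m : ℕ) (hm : A.max' hA + 1 ≤ m)
    (c c' : ℤ → Fin k)
    (hc : ∀ i j : ℤ, 0 ≤ i → i < (A.max' hA : ℤ) + 1 + m →
      0 ≤ j → j < (A.max' hA : ℤ) + 1 + m → (i - j).natAbs ∈ A → c i ≠ c j)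
    (hc' : ∀ i j : ℤ, 0 ≤ i → i < (A.max' hA : ℤ) + 1 + m →
      0 ≤ j → j < (A.max' hA : ℤ) + 1 + m → (i - j).natAbs ∈ A → c' i ≠ c' j)
    (hagree : ∀ i : ℤ, 0 ≤ i → i < (A.max' hA : ℤ) + 1 → c i = c' i) :
    ∀ i : ℤ, 0 ≤ i → i < (A.max' hA : ℤ) + 1 + m → c i = c' i := by
  set N := A.max' hA with hN
  have hNA : N ∈ A := A.max'_mem hA
  have hk1 : 1 ≤ k := (c 0).pos
  have main : ∀ n : ℕ, (n : ℤ) < (N : ℤ) + 1 + m → c (n : ℤ) = c' (n : ℤ) := by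
    intro n
    induction n using Nat.strong_induction_on with
    | _ n ih =>
      intro hnB
      by_cases hsmall : (n : ℤ) < (N : ℤ) + 1
      · exact hagree n (Int.natCast_nonneg n) hsmall
      push_neg at hsmall
      by_contra hne
      set β := c' (n : ℤ) with hβ
      have key : ∀ v : ℕ, v ∈ insert 0 A → c ((n : ℤ) - v) ≠ β := by
        intro v hv
        rcases Finset.mem_insert.mp hv with rfl | hvA
        · simpa using hne
        · have hvN : v ≤ N := Finset.le_max' A v hvA
          have hv1 : 1 ≤ v := hpos v hvA
          have hvn : v ≤ n := by omega
          have hcast : ((n - v : ℕ) : ℤ) = (n : ℤ) - v := by omega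
          have heq : c ((n : ℤ) - v) = c' ((n : ℤ) - v) := by
            rw [← hcast]; exact ih (n - v) (by omega) (by omega)
          rw [heq]
          exact hc' ((n : ℤ) - v) (n : ℤ) (by omega) (by omega) (by omega) hnB
            (by rw [show (n:ℤ) - v - n = -v by ring]; simpa using hvA)
      have vbound : ∀ v : ℕ, v ∈ insert 0 A → v ≤ N := by
        intro v hv
        rcases Finset.mem_insert.mp hv with rfl | hvA
        · exact Nat.zero_le N
        · exact Finset.le_max' A v hvA
      let C : (coreGraph A).Coloring {x : Fin k // x ≠ β} :=
        SimpleGraph.Coloring.mk (fun v => ⟨c ((n : ℤ) - v.1), key v.1 v.2⟩) (by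
          rintro u v ⟨huv, hadj⟩ hEq
          have h1 : c ((n : ℤ) - u.1) = c ((n : ℤ) - v.1) := congrArg Subtype.val hEq
          have hu := vbound u.1 u.2
          have hv := vbound v.1 v.2
          refine hc ((n : ℤ) - u.1) ((n : ℤ) - v.1) (by omega) (by omega) (by omega)
            (by omega) ?_ h1
          have : ((n : ℤ) - u.1 - ((n : ℤ) - v.1)) = -( (u.1 : ℤ) - v.1) := by ring
          rw [this, Int.natAbs_neg]
          exact hadj)
      have hcard : Fintype.card {x : Fin k // x ≠ β} = k - 1 := by
        have := Fintype.card_subtype_compl (fun x : Fin k => x = β)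
        simp only [Fintype.card_subtype_eq, Fintype.card_fin] at this; exact this
      have hcol : (coreGraph A).Colorable (k - 1) := by
        have := C.colorable
        rwa [hcard] at this
      have hle : (coreGraph A).chromaticNumber ≤ (k - 1 : ℕ) := hcol.chromaticNumber_le
      rw [← hk] at hle
      have : k ≤ k - 1 := Nat.cast_le.mp hle
      omega
  intro i hi0 hiB
  lift i to ℕ using hi0
  exact main i hiB
end

section
/- Let S = {±a_1,…,±a_n} where 0 < a_1 < … < a_n and gcd(a_1,…,a_n) = 1, and let m ≥ 1 be an integer. If no element of {a_1,…,a_n} is divisible by m+1 (i.e., S ∩ (m+1)ℤ = ∅), then χ(a_1,…,a_n) ≤ m + 2, i.e., there exists a Borel proper (m+2)-coloring of the Schreier graph G_S on F(2^ℤ). -/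
namespace BorelColoringAux

/-! ### The transition word combinatorics.

Colors: `Fin (m+2)`, where `⟨m+1⟩` is the "star" color and the others are
residues mod `q := m+1`.  Fix `M' : ℤ` (strictly larger than every element of `A`)
and `Γ := 2*q*M'`.  For a "gap word" with `R` unit gadgets, the color at
position `d ∈ ℤ` is: star if `d ≡ 0 [q]` and `d` lies in one of the `R` star
zones `[iΓ, iΓ + qM')`; otherwise `(d + ε d) mod q`, where
`ε d = #{i < R : iΓ + h(d mod q) ≤ d}` and `h(0) = qM'`, `h(u) = (q-u)M'`. -/

section Word

variable (m : ℕ) (M' : ℤ)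

/-- `q = m + 1` as an integer. -/
def qZ : ℤ := (m : ℤ) + 1

/-- Gadget spacing. -/
def Gam : ℤ := 2 * qZ m * M'

/-- Flip thresholds per residue class. -/
def hfun (u : ℤ) : ℤ := if u = 0 then qZ m * M' else (qZ m - u) * M'

/-- condition for gadget `i` to have "flipped" at position `d`. -/
def condI (i : ℕ) (d : ℤ) : Prop := (i : ℤ) * Gam m M' + hfun m M' (d % qZ m) ≤ d

instance (i : ℕ) (d : ℤ) : Decidable (condI m M' i d) := by unfold condI; infer_instance

/-- Defect count at position `d`. -/
def eps (R : ℕ) (d : ℤ) : ℤ :=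
  ∑ i ∈ Finset.range R, if condI m M' i d then 1 else 0

/-- Star positions. -/
def starP (R : ℕ) (d : ℤ) : Prop :=
  d % qZ m = 0 ∧ ∃ i : ℕ, i < R ∧ (i : ℤ) * Gam m M' ≤ d ∧ d < (i : ℤ) * Gam m M' + qZ m * M'

lemma qZ_pos : 0 < qZ m := by simp only [qZ]; omega

lemma color_lt (t : ℤ) : (t % qZ m).toNat < m + 2 := by
  have h1 : t % qZ m < qZ m := Int.emod_lt_of_pos t (qZ_pos m)
  have h0 : 0 ≤ t % qZ m := Int.emod_nonneg t (by have := qZ_pos m; omega)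
  rw [Int.toNat_lt h0]
  simp only [qZ] at h1 ⊢
  push_cast
  omega

end Word


section Word2

variable (m : ℕ) (M' : ℤ)

/-- The star color. -/
def starC : Fin (m + 2) := ⟨m + 1, by omega⟩

/-- The residue colors. -/
def mkColor (t : ℤ) : Fin (m + 2) := ⟨(t % qZ m).toNat, color_lt m t⟩

open scoped Classical in
/-- The gap word with `R` unit gadgets. -/
noncomputable def W (R : ℕ) (d : ℤ) : Fin (m + 2) :=
  if starP m M' R d then starC m else mkColor m (d + eps m M' R d)

lemma starC_ne_mkColor (t : ℤ) : starC m ≠ mkColor m t := by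
  have h1 : t % qZ m < qZ m := Int.emod_lt_of_pos t (qZ_pos m)
  have h0 : 0 ≤ t % qZ m := Int.emod_nonneg t (by have := qZ_pos m; omega)
  simp only [starC, mkColor, Ne, Fin.mk.injEq]
  intro hc
  have h2 : ((t % qZ m).toNat : ℤ) = t % qZ m := Int.toNat_of_nonneg h0
  have h3 := congrArg (Nat.cast : ℕ → ℤ) hc
  rw [h2] at h3
  simp only [qZ] at h3 h1
  push_cast at h3
  omega

lemma mkColor_dvd_of_eq {s t : ℤ} (h : mkColor m s = mkColor m t) : qZ m ∣ s - t := by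
  simp only [mkColor, Fin.mk.injEq] at h
  have hs0 : 0 ≤ s % qZ m := Int.emod_nonneg s (by have := qZ_pos m; omega)
  have ht0 : 0 ≤ t % qZ m := Int.emod_nonneg t (by have := qZ_pos m; omega)
  have : s % qZ m = t % qZ m := by omega
  rw [Int.emod_eq_emod_iff_emod_sub_eq_zero] at this
  exact Int.dvd_of_emod_eq_zero this

lemma hfun_ge (hm : 1 ≤ m) (hM' : 2 ≤ M') {u : ℤ} (h0 : 0 ≤ u) (h1 : u < qZ m) :
    M' ≤ hfun m M' u := by
  have hq : (2 : ℤ) ≤ qZ m := by simp only [qZ]; omega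
  unfold hfun
  split
  · nlinarith
  · have h1' : 1 ≤ qZ m - u := by omega
    nlinarith

lemma hfun_le (hm : 1 ≤ m) (hM' : 2 ≤ M') {u : ℤ} (h0 : 0 ≤ u) (h1 : u < qZ m) :
    hfun m M' u ≤ qZ m * M' := by
  have hq : (2 : ℤ) ≤ qZ m := by simp only [qZ]; omega
  unfold hfun
  split
  · exact le_refl _
  · nlinarith

end Word2


section Word3

variable (m : ℕ) (M' : ℤ)

lemma emod_mem (d : ℤ) : 0 ≤ d % qZ m ∧ d % qZ m < qZ m :=
  ⟨Int.emod_nonneg d (by have := qZ_pos m; omega), Int.emod_lt_of_pos d (qZ_pos m)⟩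

/-- If gadget `i`'s indicator differs at `d` and `d + a`, then `d` lies in the window
`(iΓ, iΓ + qM')`. -/
lemma diff_window (hm : 1 ≤ m) (hM' : 2 ≤ M') {a : ℤ} (ha1 : 1 ≤ a) (ha2 : a < M')
    {i : ℕ} {d : ℤ} (hne : ¬ (condI m M' i d ↔ condI m M' i (d + a))) :
    (i : ℤ) * Gam m M' < d ∧ d < (i : ℤ) * Gam m M' + qZ m * M' := by
  have h1 := emod_mem m (d := d)
  have h2 := emod_mem m (d := d + a)
  have hge1 := hfun_ge m M' hm hM' h1.1 h1.2
  have hge2 := hfun_ge m M' hm hM' h2.1 h2.2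
  have hle1 := hfun_le m M' hm hM' h1.1 h1.2
  have hle2 := hfun_le m M' hm hM' h2.1 h2.2
  unfold condI at hne
  by_cases hc1 : (i : ℤ) * Gam m M' + hfun m M' (d % qZ m) ≤ d <;>
    by_cases hc2 : (i : ℤ) * Gam m M' + hfun m M' ((d + a) % qZ m) ≤ d + a
  · exact absurd (iff_of_true hc1 hc2) hne
  · push_neg at hc2
    exact ⟨by linarith, by linarith⟩
  · push_neg at hc1
    exact ⟨by linarith, by linarith⟩
  · exact absurd (iff_of_false hc1 hc2) hne

lemma diff_unique (hm : 1 ≤ m) (hM' : 2 ≤ M') {a : ℤ} (ha1 : 1 ≤ a) (ha2 : a < M')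
    {i j : ℕ} {d : ℤ} (hi : ¬ (condI m M' i d ↔ condI m M' i (d + a)))
    (hj : ¬ (condI m M' j d ↔ condI m M' j (d + a))) : i = j := by
  have wi := diff_window m M' hm hM' ha1 ha2 hi
  have wj := diff_window m M' hm hM' ha1 ha2 hj
  have hq : (2 : ℤ) ≤ qZ m := by simp only [qZ]; omega
  have hqM : 0 < qZ m * M' := by nlinarith
  have hGam : Gam m M' = 2 * (qZ m * M') := by unfold Gam; ring
  by_contra hne
  rcases Nat.lt_or_ge i j with hij | hij
  · have : (i : ℤ) + 1 ≤ (j : ℤ) := by exact_mod_cast hij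
    have : ((i : ℤ) + 1) * Gam m M' ≤ (j : ℤ) * Gam m M' := by
      apply mul_le_mul_of_nonneg_right this (by nlinarith)
    nlinarith [wi.1, wi.2, wj.1, wj.2]
  · have hij' : j < i := by omega
    have : (j : ℤ) + 1 ≤ (i : ℤ) := by exact_mod_cast hij'
    have : ((j : ℤ) + 1) * Gam m M' ≤ (i : ℤ) * Gam m M' := by
      apply mul_le_mul_of_nonneg_right this (by nlinarith)
    nlinarith [wi.1, wi.2, wj.1, wj.2]

/-- The trichotomy for the defect-count difference. -/
lemma eps_diff (hm : 1 ≤ m) (hM' : 2 ≤ M') {a : ℤ} (ha1 : 1 ≤ a) (ha2 : a < M')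
    (R : ℕ) (d : ℤ) :
    eps m M' R (d + a) - eps m M' R d = 0 ∨
    (∃ i : ℕ, i < R ∧ ¬ condI m M' i d ∧ condI m M' i (d + a) ∧
      eps m M' R (d + a) - eps m M' R d = 1) ∨
    (∃ i : ℕ, i < R ∧ condI m M' i d ∧ ¬ condI m M' i (d + a) ∧
      eps m M' R (d + a) - eps m M' R d = -1) := by
  have hsub : eps m M' R (d + a) - eps m M' R d
      = ∑ i ∈ Finset.range R,
        ((if condI m M' i (d + a) then (1:ℤ) else 0) - (if condI m M' i d then (1:ℤ) else 0)) := by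
    rw [Finset.sum_sub_distrib]
    rfl
  set f : ℕ → ℤ := fun i =>
    (if condI m M' i (d + a) then (1:ℤ) else 0) - (if condI m M' i d then (1:ℤ) else 0) with hf
  by_cases hall : ∀ i ∈ Finset.range R, f i = 0
  · left
    rw [hsub, Finset.sum_eq_zero hall]
  · push_neg at hall
    obtain ⟨i0, hi0mem, hi0⟩ := hall
    have hdiff : ∀ i : ℕ, f i ≠ 0 → ¬ (condI m M' i d ↔ condI m M' i (d + a)) := by
      intro i hfi hiff
      apply hfi
      simp only [hf]
      by_cases hc : condI m M' i d
      · rw [if_pos hc, if_pos (hiff.mp hc)]; ring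
      · rw [if_neg hc, if_neg (fun hc2 => hc (hiff.mpr hc2))]; ring
    have hsum : eps m M' R (d + a) - eps m M' R d = f i0 := by
      rw [hsub]
      apply Finset.sum_eq_single_of_mem i0 hi0mem
      intro j hjmem hji
      by_contra hfj
      exact hji (diff_unique m M' hm hM' ha1 ha2 (hdiff j hfj) (hdiff i0 hi0))
    by_cases hc1 : condI m M' i0 d <;> by_cases hc2 : condI m M' i0 (d + a)
    · exact absurd (by simp only [hf, if_pos hc1, if_pos hc2]; ring) hi0
    · right; right
      exact ⟨i0, Finset.mem_range.mp hi0mem, hc1, hc2,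
        by rw [hsum]; simp only [hf, if_pos hc1, if_neg hc2]; ring⟩
    · right; left
      exact ⟨i0, Finset.mem_range.mp hi0mem, hc1, hc2,
        by rw [hsum]; simp only [hf, if_neg hc1, if_pos hc2]; ring⟩
    · exact absurd (by simp only [hf, if_neg hc1, if_neg hc2]; ring) hi0

end Word3


section Word4

variable (m : ℕ) (M' : ℤ)

lemma emod_add_mul (q x t : ℤ) : (x + q * t) % q = x % q :=
  Int.add_mul_emod_self_left x q t

lemma emod_pred (hm : 1 ≤ m) {a : ℤ} (hdvd : qZ m ∣ a + 1) (d : ℤ) :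
    (d + a) % qZ m = if d % qZ m = 0 then qZ m - 1 else d % qZ m - 1 := by
  have hq : (2 : ℤ) ≤ qZ m := by simp only [qZ]; omega
  obtain ⟨k, hk⟩ := hdvd
  have ha : a = qZ m * k - 1 := by omega
  have h1 : (d + a) % qZ m = (d - 1) % qZ m := by
    rw [ha, show d + (qZ m * k - 1) = (d - 1) + qZ m * k by ring, emod_add_mul]
  have hmem := emod_mem m (d := d)
  have hdm := Int.mul_ediv_add_emod d (qZ m)
  rw [h1]
  split
  · next h0 =>
    have hdist : qZ m * (d / qZ m - 1) = qZ m * (d / qZ m) - qZ m := by ring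
    have : d - 1 = (qZ m - 1) + qZ m * (d / qZ m - 1) := by omega
    rw [this, emod_add_mul]
    exact Int.emod_eq_of_lt (by omega) (by omega)
  · next h0 =>
    have : d - 1 = (d % qZ m - 1) + qZ m * (d / qZ m) := by omega
    rw [this, emod_add_mul]
    exact Int.emod_eq_of_lt (by omega) (by omega)

lemma emod_succ (hm : 1 ≤ m) {a : ℤ} (hdvd : qZ m ∣ a - 1) (d : ℤ) :
    (d + a) % qZ m = if d % qZ m = qZ m - 1 then 0 else d % qZ m + 1 := by
  have hq : (2 : ℤ) ≤ qZ m := by simp only [qZ]; omega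
  obtain ⟨k, hk⟩ := hdvd
  have ha : a = qZ m * k + 1 := by omega
  have h1 : (d + a) % qZ m = (d + 1) % qZ m := by
    rw [ha, show d + (qZ m * k + 1) = (d + 1) + qZ m * k by ring, emod_add_mul]
  have hmem := emod_mem m (d := d)
  have hdm := Int.mul_ediv_add_emod d (qZ m)
  rw [h1]
  split
  · next h0 =>
    have hdist : qZ m * (d / qZ m + 1) = qZ m * (d / qZ m) + qZ m := by ring
    have : d + 1 = 0 + qZ m * (d / qZ m + 1) := by omega
    rw [this, emod_add_mul]
    exact Int.emod_eq_of_lt (by omega) (by omega)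
  · next h0 =>
    have : d + 1 = (d % qZ m + 1) + qZ m * (d / qZ m) := by omega
    rw [this, emod_add_mul]
    exact Int.emod_eq_of_lt (by omega) (by omega)

/-- **Core Lemma 1**: the gap word is proper for every in-gap difference `a`. -/
theorem W_ne_within (hm : 1 ≤ m) (hM' : 2 ≤ M') (R : ℕ) {a : ℤ} (ha1 : 1 ≤ a)
    (ha2 : a < M') (hdvd : ¬ qZ m ∣ a) (d : ℤ) : W m M' R d ≠ W m M' R (d + a) := by
  have hq : (2 : ℤ) ≤ qZ m := by simp only [qZ]; omega
  have hmemd := emod_mem m (d := d)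
  have hmemda := emod_mem m (d := d + a)
  intro heq
  unfold W at heq
  split_ifs at heq with s1 s2 s2
  · -- both stars
    have h1 : qZ m ∣ d := Int.dvd_of_emod_eq_zero s1.1
    have h2 : qZ m ∣ d + a := Int.dvd_of_emod_eq_zero s2.1
    exact hdvd (by have := dvd_sub h2 h1; simpa using this)
  · exact starC_ne_mkColor m _ heq
  · exact starC_ne_mkColor m _ heq.symm
  · -- both colors
    have hdv := mkColor_dvd_of_eq m heq
    have hdv2 : qZ m ∣ a + (eps m M' R (d + a) - eps m M' R d) := by
      rw [show d + eps m M' R d - (d + a + eps m M' R (d + a))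
          = -(a + (eps m M' R (d + a) - eps m M' R d)) by ring] at hdv
      exact (dvd_neg).mp hdv
    rcases eps_diff m M' hm hM' ha1 ha2 R d with h0 | ⟨i, hiR, hnc1, hc2, hD⟩ | ⟨i, hiR, hc1, hnc2, hD⟩
    · rw [h0, add_zero] at hdv2
      exact hdvd hdv2
    · -- D = +1 : a ≡ -1 (mod q)
      rw [hD] at hdv2
      have hee := emod_pred m hm hdv2 d
      unfold condI at hnc1 hc2
      push_neg at hnc1
      by_cases hd0 : d % qZ m = 0
      · -- d in the star zone: contradiction with ¬ s1
        rw [hee, if_pos hd0] at hc2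
        have hfe : hfun m M' (qZ m - 1) = M' := by
          unfold hfun
          rw [if_neg (by omega)]
          ring
        have hfd : hfun m M' (d % qZ m) = qZ m * M' := by unfold hfun; rw [if_pos hd0]
        rw [hfe] at hc2
        rw [hfd] at hnc1
        exact s1 ⟨hd0, i, hiR, by linarith, by linarith⟩
      · by_cases hd1 : d % qZ m = 1
        · rw [hee, if_neg hd0, hd1] at hc2
          have hfe : hfun m M' ((1 : ℤ) - 1) = qZ m * M' := by
            unfold hfun; rw [if_pos (by ring)]
          rw [hfe] at hc2
          have hfd : hfun m M' (d % qZ m) = (qZ m - 1) * M' := by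
            unfold hfun; rw [if_neg hd0, hd1]
          rw [hfd] at hnc1
          have hr : (qZ m - 1) * M' = qZ m * M' - M' := by ring
          linarith
        · -- d % q ≥ 2
          have hd2 : 2 ≤ d % qZ m := by omega
          rw [hee, if_neg hd0] at hc2
          have hfe : hfun m M' (d % qZ m - 1) = (qZ m - d % qZ m) * M' + M' := by
            unfold hfun; rw [if_neg (by omega)]; ring
          rw [hfe] at hc2
          have hfd : hfun m M' (d % qZ m) = (qZ m - d % qZ m) * M' := by
            unfold hfun; rw [if_neg hd0]
          rw [hfd] at hnc1
          linarith
    · -- D = -1 : a ≡ 1 (mod q)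
      rw [hD] at hdv2
      have hdv3 : qZ m ∣ a - 1 := by
        have : a - 1 = a + -1 := by ring
        rw [this]; exact hdv2
      have hee := emod_succ m hm hdv3 d
      unfold condI at hc1 hnc2
      push_neg at hnc2
      by_cases hdq : d % qZ m = qZ m - 1
      · -- d + a in the star zone: contradiction with ¬ s2
        rw [hee, if_pos hdq] at hnc2
        have hfe : hfun m M' (0 : ℤ) = qZ m * M' := by unfold hfun; rw [if_pos rfl]
        rw [hfe] at hnc2
        have hfd : hfun m M' (d % qZ m) = M' := by
          unfold hfun; rw [if_neg (by omega), hdq]; ring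
        rw [hfd] at hc1
        have he0 : (d + a) % qZ m = 0 := by rw [hee, if_pos hdq]
        exact s2 ⟨he0, i, hiR, by linarith, by linarith⟩
      · by_cases hd0 : d % qZ m = 0
        · rw [hee, if_neg hdq, hd0] at hnc2
          have hfe : hfun m M' ((0 : ℤ) + 1) = (qZ m - 1) * M' := by
            unfold hfun; rw [if_neg (by omega)]; ring
          rw [hfe] at hnc2
          have hfd : hfun m M' (d % qZ m) = qZ m * M' := by unfold hfun; rw [if_pos hd0]
          rw [hfd] at hc1
          have hr : (qZ m - 1) * M' = qZ m * M' - M' := by ring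
          linarith
        · have hd1 : 1 ≤ d % qZ m ∧ d % qZ m ≤ qZ m - 2 := by omega
          rw [hee, if_neg hdq] at hnc2
          have hfe : hfun m M' (d % qZ m + 1) = (qZ m - d % qZ m) * M' - M' := by
            unfold hfun; rw [if_neg (by omega)]; ring
          rw [hfe] at hnc2
          have hfd : hfun m M' (d % qZ m) = (qZ m - d % qZ m) * M' := by
            unfold hfun; rw [if_neg hd0]
          rw [hfd] at hc1
          linarith

end Word4


section Word5

variable (m : ℕ) (M' : ℤ)

lemma Gam_nonneg (hm : 1 ≤ m) (hM' : 2 ≤ M') : 0 ≤ Gam m M' := by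
  have hq : (2 : ℤ) ≤ qZ m := by simp only [qZ]; omega
  unfold Gam; nlinarith

lemma eps_head (hm : 1 ≤ m) (hM' : 2 ≤ M') (R : ℕ) {d : ℤ} (h1 : d < M') :
    eps m M' R d = 0 := by
  apply Finset.sum_eq_zero
  intro i _
  rw [if_neg]
  unfold condI
  push_neg
  have hmem := emod_mem m (d := d)
  have hge := hfun_ge m M' hm hM' hmem.1 hmem.2
  have hi : (0 : ℤ) ≤ (i : ℤ) * Gam m M' :=
    mul_nonneg (by positivity) (Gam_nonneg m M' hm hM')
  linarith

lemma W_head (hm : 1 ≤ m) (hM' : 2 ≤ M') (R : ℕ) {d : ℤ} (h1 : d < M') :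
    W m M' R d = starC m ∨ W m M' R d = mkColor m d := by
  unfold W
  split
  · exact Or.inl rfl
  · right
    rw [eps_head m M' hm hM' R h1, add_zero]

lemma eps_tail (hm : 1 ≤ m) (hM' : 2 ≤ M') {R : ℕ} (hR : (R : ℤ) ≤ qZ m) {d : ℤ}
    (hd : (qZ m - 1) * Gam m M' + qZ m * M' ≤ d) : eps m M' R d = (R : ℤ) := by
  have h1 : ∀ i ∈ Finset.range R, (if condI m M' i d then (1:ℤ) else 0) = 1 := by
    intro i hi
    rw [if_pos]
    unfold condI
    have hmem := emod_mem m (d := d)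
    have hle := hfun_le m M' hm hM' hmem.1 hmem.2
    have hiq : (i : ℤ) ≤ qZ m - 1 := by
      have : (i : ℤ) < (R : ℤ) := by exact_mod_cast Finset.mem_range.mp hi
      omega
    have : (i : ℤ) * Gam m M' ≤ (qZ m - 1) * Gam m M' :=
      mul_le_mul_of_nonneg_right hiq (Gam_nonneg m M' hm hM')
    linarith
  unfold eps
  rw [Finset.sum_congr rfl h1, Finset.sum_const, Finset.card_range, nsmul_eq_mul, mul_one]

lemma not_star_tail (hm : 1 ≤ m) (hM' : 2 ≤ M') {R : ℕ} (hR : (R : ℤ) ≤ qZ m) {d : ℤ}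
    (hd : (qZ m - 1) * Gam m M' + qZ m * M' ≤ d) : ¬ starP m M' R d := by
  rintro ⟨-, i, hiR, -, hlt⟩
  have hiq : (i : ℤ) ≤ qZ m - 1 := by
    have h1 : (i : ℤ) < (R : ℤ) := by exact_mod_cast hiR
    omega
  have : (i : ℤ) * Gam m M' ≤ (qZ m - 1) * Gam m M' :=
    mul_le_mul_of_nonneg_right hiq (Gam_nonneg m M' hm hM')
  linarith

lemma W_tail (hm : 1 ≤ m) (hM' : 2 ≤ M') {R : ℕ} (hR : (R : ℤ) ≤ qZ m) {d : ℤ}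
    (hd : (qZ m - 1) * Gam m M' + qZ m * M' ≤ d) :
    W m M' R d = mkColor m (d + (R : ℤ)) := by
  unfold W
  rw [if_neg (not_star_tail m M' hm hM' hR hd), eps_tail m M' hm hM' hR hd]

/-- **Core Lemma 2**: properness across a marker. The left point is at distance
`d` from its (left) marker in a gap of length `g` (so `R1 ≡ -g mod q` gadgets),
deep in the tail; the right point is at distance `j` from the next marker,
close to it; `d + a = g + j`. -/
theorem W_ne_cross (hm : 1 ≤ m) (hM' : 2 ≤ M') {a : ℤ} (ha1 : 1 ≤ a) (ha2 : a < M')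
    (hdvd : ¬ qZ m ∣ a) (R1 R2 : ℕ) (hR1 : (R1 : ℤ) ≤ qZ m) {d j g : ℤ}
    (hRg : qZ m ∣ (R1 : ℤ) + g) (hdg : d + a = g + j)
    (hdtail : (qZ m - 1) * Gam m M' + qZ m * M' ≤ d) (hjM : j < M') :
    W m M' R1 d ≠ W m M' R2 j := by
  rw [W_tail m M' hm hM' hR1 hdtail]
  rcases W_head m M' hm hM' R2 hjM with hW | hW
  · rw [hW]
    exact fun h => starC_ne_mkColor m _ h.symm
  · rw [hW]
    intro heq
    have hdv := mkColor_dvd_of_eq m heq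
    have : qZ m ∣ a := by
      have h2 : d + (R1 : ℤ) - j = ((R1 : ℤ) + g) - a + (d + a - g - j) := by ring
      rw [h2, hdg, show g + j - g - j = 0 by ring, add_zero] at hdv
      obtain ⟨k, hk⟩ := hRg
      obtain ⟨l, hl⟩ := hdv
      exact ⟨k - l, by rw [mul_sub]; omega⟩
    exact hdvd this

end Word5


/-! ### Part A: shift basics and Borel markers -/

section Shift

lemma shift_shift {α : Type*} (s t : ℤ) (x : ℤ → α) :
    shift t (shift s x) = shift (s + t) x := by
  funext n
  simp only [shift]
  ring_nf

lemma shift_zero' {α : Type*} (x : ℤ → α) : shift 0 x = x := by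
  funext n; simp [shift]

lemma freePart_shift {x : ℤ → Bool} (hx : x ∈ FreePart) (s : ℤ) : shift s x ∈ FreePart := by
  intro t ht heq
  apply hx t ht
  have h1 : shift (s + t) x = shift s x := by rw [← shift_shift]; exact heq
  have h2 : shift (-s) (shift (s + t) x) = shift (-s) (shift s x) := by rw [h1]
  rw [shift_shift, shift_shift] at h2
  have e1 : s + t + -s = t := by ring
  have e2 : s + -s = 0 := by ring
  rw [e1, e2, shift_zero'] at h2
  exact h2

/-- The free part as a subtype. -/
abbrev Y : Type := {x : ℤ → Bool // x ∈ FreePart}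

/-- The shift on the free part. -/
def Ysh (s : ℤ) (x : Y) : Y := ⟨shift s x.1, freePart_shift x.2 s⟩

lemma Ysh_Ysh (s t : ℤ) (x : Y) : Ysh t (Ysh s x) = Ysh (s + t) x :=
  Subtype.ext (shift_shift s t x.1)

lemma Ysh_zero (x : Y) : Ysh 0 x = x := Subtype.ext (shift_zero' x.1)

lemma Ysh_apply (s : ℤ) (x : Y) (n : ℤ) : (Ysh s x).1 n = x.1 (n + s) := rfl

lemma measurable_eval (n : ℤ) : Measurable fun x : Y => x.1 n :=
  (measurable_pi_apply n).comp measurable_subtype_coe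

lemma measurable_Ysh (s : ℤ) : Measurable (Ysh s) := by
  apply Measurable.subtype_mk
  exact measurable_pi_lambda _ fun n => measurable_eval (n + s)

lemma measurableSet_eval (n : ℤ) (b : Bool) : MeasurableSet {x : Y | x.1 n = b} :=
  measurable_eval n (measurableSet_singleton b)

lemma measurableSet_ne (p r : ℤ) : MeasurableSet {x : Y | x.1 p ≠ x.1 r} := by
  have : {x : Y | x.1 p ≠ x.1 r}
      = ({x : Y | x.1 p = true} ∩ {x : Y | x.1 r = false}) ∪
        ({x : Y | x.1 p = false} ∩ {x : Y | x.1 r = true}) := by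
    ext x
    simp only [Set.mem_setOf_eq, Set.mem_union, Set.mem_inter_iff]
    rcases Bool.dichotomy (x.1 p) with h | h <;> rcases Bool.dichotomy (x.1 r) with h' | h' <;>
      simp [h, h']
  rw [this]
  exact ((measurableSet_eval p true).inter (measurableSet_eval r false)).union
    ((measurableSet_eval p false).inter (measurableSet_eval r true))

end Shift

section Markers

variable (NZ : ℤ)

/-- `x`'s window `[-K, K]` separates it from all its shifts by `s` with `0 < |s| ≤ NZ`. -/
def sepa (K : ℕ) (x : Y) : Prop :=
  ∀ s : ℤ, s ≠ 0 → |s| ≤ NZ → ∃ n : ℤ, |n| ≤ (K : ℤ) ∧ x.1 (n + s) ≠ x.1 n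

lemma measurableSet_sepa (K : ℕ) : MeasurableSet {x : Y | sepa NZ K x} := by
  have : {x : Y | sepa NZ K x} =
      ⋂ (s : ℤ), ⋂ (_ : s ≠ 0), ⋂ (_ : |s| ≤ NZ), ⋃ (n : ℤ), ⋃ (_ : |n| ≤ (K : ℤ)),
        {x : Y | x.1 (n + s) ≠ x.1 n} := by
    ext x
    simp only [Set.mem_setOf_eq, Set.mem_iInter, Set.mem_iUnion, sepa]
    constructor
    · intro h s hs hsN
      obtain ⟨n, h1, h2⟩ := h s hs hsN
      exact ⟨n, h1, h2⟩
    · intro h s hs hsN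
      obtain ⟨n, h1, h2⟩ := h s hs hsN
      exact ⟨n, h1, h2⟩
  rw [this]
  exact MeasurableSet.iInter fun s => MeasurableSet.iInter fun _ => MeasurableSet.iInter fun _ =>
    MeasurableSet.iUnion fun n => MeasurableSet.iUnion fun _ => measurableSet_ne (n + s) n

lemma sepa_exists (x : Y) : ∃ K : ℕ, sepa NZ K x := by
  classical
  have hwit : ∀ s : ℤ, s ≠ 0 → ∃ n : ℤ, x.1 (n + s) ≠ x.1 n := by
    intro s hs
    by_contra h
    push_neg at h
    exact x.2 s hs (funext fun n => h n)
  set wit : ℤ → ℤ := fun s => if h : ∃ n : ℤ, x.1 (n + s) ≠ x.1 n then h.choose else 0 with hwitdef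
  refine ⟨(Finset.Icc (-NZ) NZ).sup fun s => (wit s).natAbs, ?_⟩
  intro s hs0 hsN
  have hex : ∃ n : ℤ, x.1 (n + s) ≠ x.1 n := hwit s hs0
  refine ⟨wit s, ?_, ?_⟩
  · have hmem : s ∈ Finset.Icc (-NZ) NZ := by
      rw [Finset.mem_Icc]
      constructor <;> [linarith [neg_abs_le s]; linarith [le_abs_self s]]
    have hle : (wit s).natAbs ≤ (Finset.Icc (-NZ) NZ).sup fun s => (wit s).natAbs :=
      Finset.le_sup (f := fun s => (wit s).natAbs) hmem
    calc |wit s| = ((wit s).natAbs : ℤ) := (Int.abs_eq_natAbs _)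
      _ ≤ _ := by exact_mod_cast hle
  · show x.1 (wit s + s) ≠ x.1 (wit s)
    rw [hwitdef]
    simp only [dif_pos hex]
    exact hex.choose_spec

open Classical in
/-- Least separating window radius. -/
noncomputable def Kfun (x : Y) : ℕ := Nat.find (sepa_exists NZ x)

open Classical in
lemma Kfun_spec (x : Y) : sepa NZ (Kfun NZ x) x := Nat.find_spec (sepa_exists NZ x)

open Classical in
lemma measurableSet_Kfun_eq (K : ℕ) : MeasurableSet {x : Y | Kfun NZ x = K} := by
  have : {x : Y | Kfun NZ x = K} =
      {x : Y | sepa NZ K x} ∩ ⋂ (j : ℕ), ⋂ (_ : j < K), {x : Y | sepa NZ j x}ᶜ := by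
    ext x
    simp only [Set.mem_setOf_eq, Set.mem_inter_iff, Set.mem_iInter, Set.mem_compl_iff, Kfun,
      Nat.find_eq_iff]
  rw [this]
  exact (measurableSet_sepa NZ K).inter (MeasurableSet.iInter fun j => MeasurableSet.iInter
    fun _ => (measurableSet_sepa NZ j).compl)

/-- The countable code of a point: its least separating window. -/
noncomputable def codeW (x : Y) : ℕ × List Bool :=
  (Kfun NZ x, List.ofFn fun i : Fin (2 * Kfun NZ x + 1) => x.1 ((i : ℤ) - (Kfun NZ x : ℤ)))

lemma codeW_sep (x : Y) {s : ℤ} (hs0 : s ≠ 0) (hsN : |s| ≤ NZ) :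
    codeW NZ x ≠ codeW NZ (Ysh s x) := by
  intro h
  have hK : Kfun NZ x = Kfun NZ (Ysh s x) := congrArg Prod.fst h
  have hL : (List.ofFn fun i : Fin (2 * Kfun NZ x + 1) => x.1 ((i : ℤ) - (Kfun NZ x : ℤ)))
      = List.ofFn fun i : Fin (2 * Kfun NZ (Ysh s x) + 1) =>
          (Ysh s x).1 ((i : ℤ) - (Kfun NZ (Ysh s x) : ℤ)) := congrArg Prod.snd h
  obtain ⟨n, hn1, hne⟩ := Kfun_spec NZ x s hs0 hsN
  have hn1' := abs_le.mp hn1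
  set K := Kfun NZ x with hKdef
  have hidx : (n + (K : ℤ)).toNat < 2 * K + 1 := by omega
  have hidx2 : (n + (K : ℤ)).toNat < 2 * Kfun NZ (Ysh s x) + 1 := by omega
  have h2 := congrArg (fun l : List Bool => l[(n + (K : ℤ)).toNat]?) hL
  simp only [List.getElem?_ofFn, List.ofFnNthVal, dif_pos hidx, dif_pos hidx2,
    Option.some.injEq, Fin.val_mk] at h2
  rw [Ysh_apply] at h2
  have hcast : (((n + (K : ℤ)).toNat : ℤ)) = n + (K : ℤ) := Int.toNat_of_nonneg (by omega)
  have hKZ : ((Kfun NZ (Ysh s x) : ℕ) : ℤ) = (K : ℤ) := by exact_mod_cast congrArg Nat.cast hK.symm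
  rw [hcast, hKZ] at h2
  have e1 : n + (K : ℤ) - (K : ℤ) = n := by ring
  rw [e1] at h2
  exact hne h2.symm

lemma measurableSet_codeW_eq (w : ℕ × List Bool) : MeasurableSet {x : Y | codeW NZ x = w} := by
  obtain ⟨K, l⟩ := w
  have hiff : ∀ x : Y, codeW NZ x = (K, l) ↔ (Kfun NZ x = K ∧
      List.ofFn (fun i : Fin (2 * K + 1) => x.1 ((i : ℤ) - (K : ℤ))) = l) := by
    intro x
    constructor
    · intro h
      have hK : Kfun NZ x = K := congrArg Prod.fst h
      subst hK
      exact ⟨rfl, congrArg Prod.snd h⟩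
    · rintro ⟨hK, hl⟩
      subst hK
      simp only [codeW, Prod.mk.injEq]
      exact ⟨trivial, hl⟩
  have : {x : Y | codeW NZ x = (K, l)} = {x : Y | Kfun NZ x = K} ∩
      {x : Y | List.ofFn (fun i : Fin (2 * K + 1) => x.1 ((i : ℤ) - (K : ℤ))) = l} := by
    ext x
    simp only [Set.mem_setOf_eq, Set.mem_inter_iff, hiff]
  rw [this]
  refine (measurableSet_Kfun_eq NZ K).inter ?_
  by_cases hlen : l.length = 2 * K + 1
  · have hset : {x : Y | List.ofFn (fun i : Fin (2 * K + 1) => x.1 ((i : ℤ) - (K : ℤ))) = l}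
        = ⋂ (i : Fin (2 * K + 1)), {x : Y | x.1 ((i : ℤ) - (K : ℤ)) = l[i.1]'(by omega)} := by
      ext x
      simp only [Set.mem_setOf_eq, Set.mem_iInter]
      constructor
      · intro h i
        have h1 : i.1 < (List.ofFn (fun i : Fin (2 * K + 1) => x.1 ((i : ℤ) - (K : ℤ)))).length := by
          rw [List.length_ofFn]; exact i.2
        have h2 : (List.ofFn (fun i : Fin (2 * K + 1) => x.1 ((i : ℤ) - (K : ℤ))))[i.1]'h1
            = l[i.1]'(by omega) := by
          congr 1
        rw [List.getElem_ofFn] at h2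
        simpa using h2
      · intro h
        apply List.ext_getElem (by simp [hlen])
        intro t h1 h2
        rw [List.getElem_ofFn]
        exact h ⟨t, by simpa using h1⟩
    rw [hset]
    exact MeasurableSet.iInter fun i => measurableSet_eval _ _
  · have hset : {x : Y | List.ofFn (fun i : Fin (2 * K + 1) => x.1 ((i : ℤ) - (K : ℤ))) = l} = ∅ := by
      ext x
      simp only [Set.mem_setOf_eq, Set.mem_empty_iff_false, iff_false]
      intro h
      apply hlen
      rw [← h]
      simp
    rw [hset]
    exact MeasurableSet.empty

/-- Numeric code. -/
noncomputable def codeN (x : Y) : ℕ := Encodable.encode (codeW NZ x)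

lemma codeN_sep (x : Y) {s : ℤ} (hs0 : s ≠ 0) (hsN : |s| ≤ NZ) :
    codeN NZ x ≠ codeN NZ (Ysh s x) := fun h =>
  codeW_sep NZ x hs0 hsN (Encodable.encode_injective h)

lemma measurableSet_codeN_eq (k : ℕ) : MeasurableSet {x : Y | codeN NZ x = k} := by
  by_cases hk : ∃ w : ℕ × List Bool, Encodable.encode w = k
  · obtain ⟨w, hw⟩ := hk
    have : {x : Y | codeN NZ x = k} = {x : Y | codeW NZ x = w} := by
      ext x
      simp only [Set.mem_setOf_eq, codeN, ← hw]
      exact ⟨fun h => Encodable.encode_injective h, fun h => by rw [h]⟩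
    rw [this]
    exact measurableSet_codeW_eq NZ w
  · have : {x : Y | codeN NZ x = k} = ∅ := by
      ext x
      simp only [Set.mem_setOf_eq, Set.mem_empty_iff_false, iff_false]
      exact fun h => hk ⟨codeW NZ x, h⟩
    rw [this]
    exact MeasurableSet.empty

/-- The greedy marker layers. -/
def gA : ℕ → Set Y
  | k => {x | codeN NZ x = k ∧
      ∀ j : Fin k, ∀ s : ℤ, s ≠ 0 → |s| ≤ NZ → Ysh s x ∉ gA j.1}
  termination_by k => k
  decreasing_by exact j.2

lemma mem_gA_iff (k : ℕ) (x : Y) : x ∈ gA NZ k ↔ (codeN NZ x = k ∧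
    ∀ j : Fin k, ∀ s : ℤ, s ≠ 0 → |s| ≤ NZ → Ysh s x ∉ gA NZ j.1) := by
  conv_lhs => rw [gA]
  exact Iff.rfl


/-- The marker set. -/
def markSet : Set Y := ⋃ k, gA NZ k

lemma measurableSet_gA (k : ℕ) : MeasurableSet (gA NZ k) := by
  induction k using Nat.strong_induction_on with
  | _ k ih =>
    have : gA NZ k = {x : Y | codeN NZ x = k} ∩
        ⋂ (j : Fin k), ⋂ (s : ℤ), ⋂ (_ : s ≠ 0), ⋂ (_ : |s| ≤ NZ),
          (Ysh s) ⁻¹' (gA NZ j.1)ᶜ := by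
      ext x
      rw [Set.mem_inter_iff, mem_gA_iff]
      simp only [Set.mem_setOf_eq, Set.mem_iInter, Set.mem_preimage, Set.mem_compl_iff]
    rw [this]
    exact (measurableSet_codeN_eq NZ k).inter (MeasurableSet.iInter fun j =>
      MeasurableSet.iInter fun s => MeasurableSet.iInter fun _ => MeasurableSet.iInter fun _ =>
        measurable_Ysh s ((ih j.1 j.2).compl))

lemma measurableSet_markSet : MeasurableSet (markSet NZ) :=
  MeasurableSet.iUnion fun k => measurableSet_gA NZ k

lemma mark_indep {x : Y} {s : ℤ} (hs0 : s ≠ 0) (hsN : |s| ≤ NZ)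
    (hx : x ∈ markSet NZ) (hsx : Ysh s x ∈ markSet NZ) : False := by
  obtain ⟨S1, ⟨k1, rfl⟩, hx1⟩ := hx
  obtain ⟨S2, ⟨k2, rfl⟩, hx2⟩ := hsx
  have hc1 : codeN NZ x = k1 := ((mem_gA_iff NZ k1 x).mp hx1).1
  have hc2 : codeN NZ (Ysh s x) = k2 := ((mem_gA_iff NZ k2 _).mp hx2).1
  have hne : k1 ≠ k2 := by
    rw [← hc1, ← hc2]
    exact codeN_sep NZ x hs0 hsN
  rcases Nat.lt_or_ge k1 k2 with hlt | hge
  · have := ((mem_gA_iff NZ k2 _).mp hx2).2 ⟨k1, hlt⟩ (-s) (neg_ne_zero.mpr hs0)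
      (by rwa [abs_neg])
    rw [Ysh_Ysh, add_neg_cancel, Ysh_zero] at this
    exact this hx1
  · have hlt : k2 < k1 := by omega
    exact ((mem_gA_iff NZ k1 x).mp hx1).2 ⟨k2, hlt⟩ s hs0 hsN hx2

lemma mark_max (hNZ : 0 ≤ NZ) (x : Y) : ∃ s : ℤ, |s| ≤ NZ ∧ Ysh s x ∈ markSet NZ := by
  by_cases hx : x ∈ gA NZ (codeN NZ x)
  · exact ⟨0, by simpa using hNZ, by rw [Ysh_zero]; exact Set.mem_iUnion.mpr ⟨_, hx⟩⟩
  · rw [mem_gA_iff] at hx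
    push_neg at hx
    obtain ⟨j, s, hs0, hsN, hmem⟩ := hx rfl
    exact ⟨s, hsN, Set.mem_iUnion.mpr ⟨j.1, hmem⟩⟩

end Markers


section Dist

variable (NZ : ℤ)

lemma exists_left (hNZ : 0 ≤ NZ) (x : Y) : ∃ d : ℕ, Ysh (-(d : ℤ)) x ∈ markSet NZ := by
  obtain ⟨s, hsN, hmem⟩ := mark_max NZ hNZ (Ysh (-NZ) x)
  rw [Ysh_Ysh] at hmem
  have hs := abs_le.mp hsN
  refine ⟨(NZ - s).toNat, ?_⟩
  have : -(((NZ - s).toNat : ℤ)) = -NZ + s := by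
    rw [Int.toNat_of_nonneg (by omega)]; ring
  rw [this]
  exact hmem

lemma exists_right (hNZ : 0 ≤ NZ) (x : Y) : ∃ e : ℕ, Ysh ((e : ℤ) + 1) x ∈ markSet NZ := by
  obtain ⟨s, hsN, hmem⟩ := mark_max NZ hNZ (Ysh (NZ + 1) x)
  rw [Ysh_Ysh] at hmem
  have hs := abs_le.mp hsN
  refine ⟨(NZ + s).toNat, ?_⟩
  have : ((NZ + s).toNat : ℤ) + 1 = NZ + 1 + s := by
    rw [Int.toNat_of_nonneg (by omega)]; ring
  rw [this]
  exact hmem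

open Classical in
/-- Distance to the marker at or to the left. -/
noncomputable def dL (hNZ : 0 ≤ NZ) (x : Y) : ℕ := Nat.find (exists_left NZ hNZ x)

open Classical in
/-- dR + 1 is the distance to the first marker strictly to the right. -/
noncomputable def dR (hNZ : 0 ≤ NZ) (x : Y) : ℕ := Nat.find (exists_right NZ hNZ x)

open Classical in
lemma dL_spec (hNZ : 0 ≤ NZ) (x : Y) : Ysh (-(dL NZ hNZ x : ℤ)) x ∈ markSet NZ :=
  Nat.find_spec (exists_left NZ hNZ x)

open Classical in
lemma dL_min (hNZ : 0 ≤ NZ) (x : Y) {d : ℕ} (hd : d < dL NZ hNZ x) : Ysh (-(d : ℤ)) x ∉ markSet NZ :=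
  Nat.find_min (exists_left NZ hNZ x) hd

open Classical in
lemma dR_spec (hNZ : 0 ≤ NZ) (x : Y) : Ysh ((dR NZ hNZ x : ℤ) + 1) x ∈ markSet NZ :=
  Nat.find_spec (exists_right NZ hNZ x)

open Classical in
lemma dR_min (hNZ : 0 ≤ NZ) (x : Y) {e : ℕ} (he : e < dR NZ hNZ x) : Ysh ((e : ℤ) + 1) x ∉ markSet NZ :=
  Nat.find_min (exists_right NZ hNZ x) he

open Classical in
lemma measurableSet_dL_eq (hNZ : 0 ≤ NZ) (i : ℕ) : MeasurableSet {x : Y | dL NZ hNZ x = i} := by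
  have : {x : Y | dL NZ hNZ x = i} = ((Ysh (-(i : ℤ))) ⁻¹' markSet NZ) ∩
      ⋂ (j : ℕ), ⋂ (_ : j < i), ((Ysh (-(j : ℤ))) ⁻¹' markSet NZ)ᶜ := by
    ext x
    simp only [dL, Nat.find_eq_iff, Set.mem_inter_iff, Set.mem_preimage, Set.mem_iInter,
      Set.mem_compl_iff, Set.mem_setOf_eq]
  rw [this]
  exact (measurable_Ysh _ (measurableSet_markSet NZ)).inter (MeasurableSet.iInter fun j =>
    MeasurableSet.iInter fun _ => (measurable_Ysh _ (measurableSet_markSet NZ)).compl)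

open Classical in
lemma measurableSet_dR_eq (hNZ : 0 ≤ NZ) (i : ℕ) : MeasurableSet {x : Y | dR NZ hNZ x = i} := by
  have : {x : Y | dR NZ hNZ x = i} = ((Ysh ((i : ℤ) + 1)) ⁻¹' markSet NZ) ∩
      ⋂ (j : ℕ), ⋂ (_ : j < i), ((Ysh ((j : ℤ) + 1)) ⁻¹' markSet NZ)ᶜ := by
    ext x
    simp only [dR, Nat.find_eq_iff, Set.mem_inter_iff, Set.mem_preimage, Set.mem_iInter,
      Set.mem_compl_iff, Set.mem_setOf_eq]
  rw [this]
  exact (measurable_Ysh _ (measurableSet_markSet NZ)).inter (MeasurableSet.iInter fun j =>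
    MeasurableSet.iInter fun _ => (measurable_Ysh _ (measurableSet_markSet NZ)).compl)

/-- The gap containing `x` is longer than `NZ`. -/
lemma gap_gt (hNZ : 0 ≤ NZ) (x : Y) : NZ < (dL NZ hNZ x : ℤ) + (dR NZ hNZ x : ℤ) + 1 := by
  by_contra hle
  push_neg at hle
  have hpos : (0 : ℤ) < (dL NZ hNZ x : ℤ) + (dR NZ hNZ x : ℤ) + 1 := by positivity
  apply mark_indep NZ (s := (dL NZ hNZ x : ℤ) + (dR NZ hNZ x : ℤ) + 1)
    hpos.ne' (by rw [abs_of_nonneg hpos.le]; exact hle) (dL_spec NZ hNZ x)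
  rw [Ysh_Ysh]
  have : -(dL NZ hNZ x : ℤ) + ((dL NZ hNZ x : ℤ) + (dR NZ hNZ x : ℤ) + 1)
      = (dR NZ hNZ x : ℤ) + 1 := by ring
  rw [this]
  exact dR_spec NZ hNZ x

/-- Shifting within a gap. -/
lemma dL_shift_within (hNZ : 0 ≤ NZ) {x : Y} {a : ℕ} (ha : 1 ≤ a) (haN : (a : ℤ) ≤ NZ)
    (hin : a ≤ dR NZ hNZ x) : dL NZ hNZ (Ysh (a : ℤ) x) = dL NZ hNZ x + a := by
  classical
  apply le_antisymm
  · apply Nat.find_le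
    rw [Ysh_Ysh]
    have : (a : ℤ) + -((dL NZ hNZ x + a : ℕ) : ℤ) = -(dL NZ hNZ x : ℤ) := by push_cast; ring
    rw [this]
    exact dL_spec NZ hNZ x
  · by_contra hlt
    push_neg at hlt
    set d' := dL NZ hNZ (Ysh (a : ℤ) x) with hd'
    have hmem : Ysh (-(d' : ℤ)) (Ysh (a : ℤ) x) ∈ markSet NZ := dL_spec NZ hNZ _
    rw [Ysh_Ysh] at hmem
    rcases Nat.lt_or_ge d' a with hda | hda
    · -- marker strictly inside (0, a] ⊆ (0, dR]: contradiction with dR_min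
      have he : (a : ℤ) + -(d' : ℤ) = ((a - d' - 1 : ℕ) : ℤ) + 1 := by omega
      rw [he] at hmem
      exact dR_min NZ hNZ x (by omega) hmem
    · have he : (a : ℤ) + -(d' : ℤ) = -(((d' - a : ℕ)) : ℤ) := by
        push_cast [Nat.cast_sub hda]
        ring
      rw [he] at hmem
      exact dL_min NZ hNZ x (by omega) hmem

lemma dR_shift_within (hNZ : 0 ≤ NZ) {x : Y} {a : ℕ} (ha : 1 ≤ a) (haN : (a : ℤ) ≤ NZ)
    (hin : a ≤ dR NZ hNZ x) : dR NZ hNZ (Ysh (a : ℤ) x) = dR NZ hNZ x - a := by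
  classical
  apply le_antisymm
  · apply Nat.find_le
    rw [Ysh_Ysh]
    have : (a : ℤ) + (((dR NZ hNZ x - a : ℕ) : ℤ) + 1) = (dR NZ hNZ x : ℤ) + 1 := by omega
    rw [this]
    exact dR_spec NZ hNZ x
  · by_contra hlt
    push_neg at hlt
    set e' := dR NZ hNZ (Ysh (a : ℤ) x) with he'
    have hmem : Ysh ((e' : ℤ) + 1) (Ysh (a : ℤ) x) ∈ markSet NZ := dR_spec NZ hNZ _
    rw [Ysh_Ysh] at hmem
    have he : (a : ℤ) + ((e' : ℤ) + 1) = ((a + e' : ℕ) : ℤ) + 1 := by push_cast; ring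
    rw [he] at hmem
    exact dR_min NZ hNZ x (by omega) hmem

/-- Shifting across the next marker. -/
lemma dL_shift_across (hNZ : 0 ≤ NZ) {x : Y} {a : ℕ} (ha : 1 ≤ a) (haN : (a : ℤ) ≤ NZ)
    (hout : dR NZ hNZ x + 1 ≤ a) : dL NZ hNZ (Ysh (a : ℤ) x) = a - (dR NZ hNZ x + 1) := by
  classical
  apply le_antisymm
  · apply Nat.find_le
    rw [Ysh_Ysh]
    have : (a : ℤ) + -((a - (dR NZ hNZ x + 1) : ℕ) : ℤ) = (dR NZ hNZ x : ℤ) + 1 := by omega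
    rw [this]
    exact dR_spec NZ hNZ x
  · by_contra hlt
    push_neg at hlt
    set d' := dL NZ hNZ (Ysh (a : ℤ) x) with hd'
    have hmem : Ysh (-(d' : ℤ)) (Ysh (a : ℤ) x) ∈ markSet NZ := dL_spec NZ hNZ _
    rw [Ysh_Ysh] at hmem
    -- marker at a - d' > dR + 1 rel x; also marker at dR + 1: independence
    have hs0 : ((a : ℤ) - (d' : ℤ)) - ((dR NZ hNZ x : ℤ) + 1) ≠ 0 := by
      have : (d' : ℤ) < (a : ℤ) - (dR NZ hNZ x : ℤ) - 1 := by push_cast; omega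
      omega
    apply mark_indep NZ (s := ((a : ℤ) - (d' : ℤ)) - ((dR NZ hNZ x : ℤ) + 1)) hs0
      (by rw [abs_of_nonneg (by push_cast; omega)]; push_cast; omega) (dR_spec NZ hNZ x)
    rw [Ysh_Ysh]
    have : (dR NZ hNZ x : ℤ) + 1 + ((a : ℤ) - (d' : ℤ) - ((dR NZ hNZ x : ℤ) + 1))
        = (a : ℤ) + -(d' : ℤ) := by ring
    rw [this]
    exact hmem

end Dist


end BorelColoringAux

open BorelColoringAux

theorem main_thm
    (A : Finset ℕ) (hA : A.Nonempty) (hpos : ∀ a ∈ A, 0 < a)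
    (m : ℕ) (hm : 1 ≤ m) (hdvd : ∀ a ∈ A, ¬ (m + 1) ∣ a) :
    ∃ c : {x : ℤ → Bool // x ∈ FreePart} → Fin (m + 2), IsBorelColoring A c := by
  classical
  set Mn : ℕ := A.sup id with hMndef
  have hMn : ∀ a ∈ A, a ≤ Mn := fun a ha => Finset.le_sup (f := id) ha
  have hMn1 : 1 ≤ Mn := by
    obtain ⟨a0, ha0⟩ := hA
    exact le_trans (hpos a0 ha0) (hMn a0 ha0)
  set M' : ℤ := (Mn : ℤ) + 1 with hM'def
  have hM' : 2 ≤ M' := by omega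
  have hq2 : (2 : ℤ) ≤ qZ m := by simp only [qZ]; omega
  have hGam : Gam m M' = 2 * qZ m * M' := rfl
  have hGamM : M' ≤ Gam m M' := by nlinarith
  have hGampos : 0 < Gam m M' := by nlinarith
  set NZ : ℤ := 2 * qZ m * Gam m M' with hNZdef
  have hNZ : (0 : ℤ) ≤ NZ := by nlinarith
  have hM'NZ : M' ≤ NZ := by nlinarith
  -- the gadget count for a gap of length `g`
  set Rf : ℕ → ℕ := fun g => ((-(g : ℤ)) % qZ m).toNat with hRfdef
  have hRfz : ∀ g : ℕ, ((Rf g : ℕ) : ℤ) = (-(g : ℤ)) % qZ m := fun g =>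
    Int.toNat_of_nonneg (Int.emod_nonneg _ (by omega))
  have hRfle : ∀ g : ℕ, ((Rf g : ℕ) : ℤ) ≤ qZ m := fun g => by
    rw [hRfz]
    exact (Int.emod_lt_of_pos _ (by omega)).le
  have hRfdvd : ∀ g : ℕ, qZ m ∣ ((Rf g : ℕ) : ℤ) + (g : ℤ) := fun g => by
    refine ⟨-((-(g : ℤ)) / qZ m), ?_⟩
    rw [hRfz, Int.emod_def]
    ring
  -- the coloring
  set c : Y → Fin (m + 2) := fun x =>
    W m M' (Rf (dL NZ hNZ x + dR NZ hNZ x + 1)) ((dL NZ hNZ x : ℕ) : ℤ) with hcdef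
  have hmeas : Measurable c := by
    intro s _
    have hset : c ⁻¹' s = ⋃ (i : ℕ) (j : ℕ)
        (_ : W m M' (Rf (i + j + 1)) ((i : ℕ) : ℤ) ∈ s),
        ({x : Y | dL NZ hNZ x = i} ∩ {x : Y | dR NZ hNZ x = j}) := by
      ext x
      simp only [Set.mem_preimage, Set.mem_iUnion, Set.mem_inter_iff, Set.mem_setOf_eq]
      constructor
      · intro hx
        exact ⟨dL NZ hNZ x, dR NZ hNZ x, hx, rfl, rfl⟩
      · rintro ⟨i, j, hW, hdli, hdrj⟩
        show W m M' (Rf (dL NZ hNZ x + dR NZ hNZ x + 1)) ((dL NZ hNZ x : ℕ) : ℤ) ∈ s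
        rw [hdli, hdrj]
        exact hW
    rw [hset]
    exact MeasurableSet.iUnion fun i => MeasurableSet.iUnion fun j =>
      MeasurableSet.iUnion fun _ =>
        (measurableSet_dL_eq NZ hNZ i).inter (measurableSet_dR_eq NZ hNZ j)
  refine ⟨c, hmeas, ?_⟩
  intro x a ha h
  have hy : (⟨shift ((a : ℕ) : ℤ) x.1, h⟩ : Y) = Ysh ((a : ℕ) : ℤ) x := Subtype.ext rfl
  rw [hy]
  have ha1 : 1 ≤ a := hpos a ha
  have haM : ((a : ℕ) : ℤ) < M' := by
    have := hMn a ha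
    omega
  have hdvd' : ¬ qZ m ∣ ((a : ℕ) : ℤ) := by
    intro hdd
    apply hdvd a ha
    have h2 : ((m + 1 : ℕ) : ℤ) ∣ ((a : ℕ) : ℤ) := by
      have : ((m + 1 : ℕ) : ℤ) = qZ m := by simp only [qZ]; push_cast; ring
      rw [this]
      exact hdd
    exact_mod_cast h2
  have haN : ((a : ℕ) : ℤ) ≤ NZ := by
    have h1 : ((a : ℕ) : ℤ) ≤ M' := haM.le
    linarith
  have hgapx := gap_gt NZ hNZ x
  rcases Nat.lt_or_ge (dR NZ hNZ x) a with hout | hin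
  · -- the pair crosses the next marker
    have h1 := dL_shift_across NZ hNZ (x := x) ha1 haN (by omega)
    show W m M' (Rf (dL NZ hNZ x + dR NZ hNZ x + 1)) ((dL NZ hNZ x : ℕ) : ℤ) ≠
      W m M' (Rf (dL NZ hNZ (Ysh ((a : ℕ) : ℤ) x) + dR NZ hNZ (Ysh ((a : ℕ) : ℤ) x) + 1))
        ((dL NZ hNZ (Ysh ((a : ℕ) : ℤ) x) : ℕ) : ℤ)
    rw [h1]
    refine W_ne_cross m M' hm hM' (a := ((a : ℕ) : ℤ)) (by exact_mod_cast ha1) haM hdvd'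
      _ _ (hRfle _) (g := ((dL NZ hNZ x + dR NZ hNZ x + 1 : ℕ) : ℤ)) (hRfdvd _) ?_ ?_ ?_
    · -- d + a = g + j
      push_cast
      omega
    · -- tail bound
      have hd1 : NZ - M' + 2 ≤ ((dL NZ hNZ x : ℕ) : ℤ) := by
        push_cast at hgapx ⊢
        omega
      have hd2 : (qZ m - 1) * Gam m M' + qZ m * M' ≤ NZ - M' + 2 := by
        have hkey : (0 : ℤ) ≤ (qZ m + 1) * (Gam m M' - M') := by
          apply mul_nonneg (by linarith) (by linarith)
        nlinarith
      linarith
    · -- j < M'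
      push_cast
      omega
  · -- the pair stays within the gap
    have h1 := dL_shift_within NZ hNZ ha1 haN hin
    have h2 := dR_shift_within NZ hNZ ha1 haN hin
    show W m M' (Rf (dL NZ hNZ x + dR NZ hNZ x + 1)) ((dL NZ hNZ x : ℕ) : ℤ) ≠
      W m M' (Rf (dL NZ hNZ (Ysh ((a : ℕ) : ℤ) x) + dR NZ hNZ (Ysh ((a : ℕ) : ℤ) x) + 1))
        ((dL NZ hNZ (Ysh ((a : ℕ) : ℤ) x) : ℕ) : ℤ)
    rw [h1, h2]
    have hgap : dL NZ hNZ x + a + (dR NZ hNZ x - a) + 1 = dL NZ hNZ x + dR NZ hNZ x + 1 := by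
      omega
    rw [hgap]
    have hcast : ((dL NZ hNZ x + a : ℕ) : ℤ) = ((dL NZ hNZ x : ℕ) : ℤ) + ((a : ℕ) : ℤ) := by
      push_cast
      ring
    rw [hcast]
    exact W_ne_within m M' hm hM' _ (by exact_mod_cast ha1) haM hdvd' _


/-- If `m ≥ 1` and no element of `A` is divisible by `m + 1`
(i.e. `S ∩ (m+1)ℤ = ∅`), then `χ(a₁,…,aₙ) ≤ m + 2`: there is a Borel proper
`(m+2)`-coloring of `G_S` on `F(2^ℤ)`. -/
theorem borelChromatic_le_of_avoiding_multiples
    (A : Finset ℕ) (hA : A.Nonempty) (hpos : ∀ a ∈ A, 0 < a) (hgcd : A.gcd id = 1)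
    (m : ℕ) (hm : 1 ≤ m) (hdvd : ∀ a ∈ A, ¬ (m + 1) ∣ a) :
    (∃ c : {x : ℤ → Bool // x ∈ FreePart} → Fin (m + 2), IsBorelColoring A c) ∧
    borelChromatic A ≤ m + 2 := by
  obtain ⟨c, hc⟩ := main_thm A hA hpos m hm hdvd
  exact ⟨⟨c, hc⟩, Nat.sInf_le ⟨c, hc⟩⟩
end
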